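/- arXiv:1806.05464 — 7 statements merged into one kernel-verified Lean document; each statement's English description precedes it below -/
import Mathlib

section
/- Let t₀ ∈ ℝ, let x : [t₀,∞) → ℝⁿ and ξ : [t₀,∞) → ℝᵐ be continuous signals, and let {t_k}_{k≥0} be a strictly increasing sequence of sampling times with first element t₀. Define the auxiliary input r : [t₀,∞) → ℝᵐ by r(t) = ∫_{t_k}^{t} ξ(s) ds for t ∈ [t_k, t_{k+1}), and suppose each t_{k+1} is generated by the triggering law with a class K∞ function γ̄. Assume: (i) there exist class KL functions β̃, β and class K∞ functions γ̃, γ such that for all t₀ ≤ t₀′ ≤ t, ‖x(t)‖ ≤ max{β̃(‖x(t₀′)‖, t−t₀′), γ̃(‖r_[t₀′,t]‖)} and ‖ξ(t)‖ ≤ max{β(‖x(t₀′)‖, t−t₀′), γ(‖r_[t₀′,t]‖)}; (ii) limsup_{s→0⁺} γ(s)/s < ∞; (iii) there is a constant ε > 1 with γ̄(s) ≥ ε·γ(s) for all s > 0, and the limit lim_{s→0⁺} γ̄(s)/s exists and is positive and finite. Then (a) inf_{k≥0} (t_{k+1} − t_k) > 0 (no Zeno behavior occurs), and (b) x(t) →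 0, ξ(t) → 0 and r(t) → 0 as t → ∞. -/
open Filter Set

/-- A function is of class K∞. -/
def IsClassKInf (γ : ℝ → ℝ) : Prop :=
  ContinuousOn γ (Set.Ici 0) ∧ StrictMonoOn γ (Set.Ici 0) ∧ γ 0 = 0 ∧
    Filter.Tendsto γ Filter.atTop Filter.atTop

/-- A function is of class KL. -/
def IsClassKL (β : ℝ → ℝ → ℝ) : Prop :=
  (∀ t, 0 ≤ t → ContinuousOn (fun s => β s t) (Set.Ici 0) ∧
      StrictMonoOn (fun s => β s t) (Set.Ici 0) ∧ β 0 t = 0) ∧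
  (∀ s, 0 ≤ s → AntitoneOn (fun t => β s t) (Set.Ici 0) ∧
      Filter.Tendsto (fun t => β s t) Filter.atTop (nhds 0))

/-- `‖v_[a,b]‖ = sup_{a ≤ τ ≤ b} ‖v τ‖`. -/
noncomputable def supNorm {E : Type*} [NormedAddCommGroup E] (v : ℝ → E) (a b : ℝ) : ℝ :=
  sSup ((fun τ => ‖v τ‖) '' Set.Icc a b)

/-- The next triggering time (in `EReal`, so that `sInf ∅ = ⊤`). -/
noncomputable def triggerTime {E : Type*} [NormedAddCommGroup E]
    (γb : ℝ → ℝ) (r : ℝ → E) (tk : ℝ) : EReal :=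
  sInf (((↑) : ℝ → EReal) ''
    {t : ℝ | tk < t ∧ (t - tk) * γb (supNorm r tk t) = supNorm r tk t ∧ supNorm r tk t ≠ 0})

lemma supNorm_nonneg {E : Type*} [NormedAddCommGroup E] (v : ℝ → E) (a b : ℝ) :
    0 ≤ supNorm v a b :=
  Real.sSup_nonneg (by rintro x ⟨s, _, rfl⟩; exact norm_nonneg _)

lemma supNorm_le {E : Type*} [NormedAddCommGroup E] {v : ℝ → E} {a b c : ℝ} (hc : 0 ≤ c)
    (h : ∀ s ∈ Set.Icc a b, ‖v s‖ ≤ c) : supNorm v a b ≤ c :=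
  Real.sSup_le (by rintro x ⟨s, hs, rfl⟩; exact h s hs) hc

lemma le_supNorm {E : Type*} [NormedAddCommGroup E] {v : ℝ → E} {a b c s : ℝ}
    (h : ∀ u ∈ Set.Icc a b, ‖v u‖ ≤ c) (hs : s ∈ Set.Icc a b) : ‖v s‖ ≤ supNorm v a b :=
  le_csSup ⟨c, by rintro x ⟨u, hu, rfl⟩; exact h u hu⟩ ⟨s, hs, rfl⟩

lemma le_supNorm_cont {E : Type*} [NormedAddCommGroup E] {v : ℝ → E} {a b s : ℝ}
    (hv : ContinuousOn v (Set.Icc a b)) (hs : s ∈ Set.Icc a b) : ‖v s‖ ≤ supNorm v a b :=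
  le_csSup (isCompact_Icc.image_of_continuousOn hv.norm).bddAbove ⟨s, hs, rfl⟩

lemma small_gain {A c ε : ℝ} (hε : 1 < ε) (hA : 0 ≤ A) (hc : 0 ≤ c)
    (h : A ≤ max c (A / ε)) : A ≤ c := by
  rcases le_max_iff.mp h with h' | h'
  · exact h'
  · have hε0 : 0 < ε := by linarith
    rw [le_div_iff₀ hε0] at h'
    nlinarith

lemma exists_piece {t : ℕ → ℝ} (hmono : StrictMono t) {s : ℝ} (h0 : t 0 ≤ s) {K : ℕ}
    (hK : s < t K) : ∃ k, t k ≤ s ∧ s < t (k + 1) := by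
  classical
  have hP : ∃ n, s < t n := ⟨K, hK⟩
  have hspec : s < t (Nat.find hP) := Nat.find_spec hP
  have hn0 : Nat.find hP ≠ 0 := by
    intro h
    rw [h] at hspec
    exact absurd hspec (not_lt.mpr h0)
  refine ⟨Nat.find hP - 1, ?_, ?_⟩
  · exact not_lt.mp (Nat.find_min hP (by omega))
  · have h : Nat.find hP - 1 + 1 = Nat.find hP := by omega
    rw [h]; exact hspec

/-- Theorem 1 of the paper: event-triggered stabilization via the input-delay method. -/
theorem event_triggered_stabilization {n m : ℕ} (t0 : ℝ)
    (x : ℝ → EuclideanSpace ℝ (Fin n)) (ξ r : ℝ → EuclideanSpace ℝ (Fin m))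
    (hxcont : ContinuousOn x (Set.Ici t0)) (hξcont : ContinuousOn ξ (Set.Ici t0))
    (t : ℕ → ℝ) (ht0 : t 0 = t0) (hmono : StrictMono t)
    (γb : ℝ → ℝ) (hγb : IsClassKInf γb)
    -- the auxiliary input is the integral of the auxiliary output over the sampling period
    (hr : ∀ k : ℕ, ∀ s ∈ Set.Ico (t k) (t (k + 1)), r s = ∫ τ in (t k)..s, ξ τ)
    -- each `t (k+1)` is generated by the triggering law
    (htrig : ∀ k : ℕ, ((t (k + 1) : ℝ) : EReal) = triggerTime γb r (t k))
    -- (i) ISS and IOS estimates from every intermediate initial time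
    (βt β : ℝ → ℝ → ℝ) (γt γ : ℝ → ℝ)
    (hβt : IsClassKL βt) (hβ : IsClassKL β) (hγt : IsClassKInf γt) (hγ : IsClassKInf γ)
    (hISS : ∀ t0' t', t0 ≤ t0' → t0' ≤ t' →
      ‖x t'‖ ≤ max (βt ‖x t0'‖ (t' - t0')) (γt (supNorm r t0' t')))
    (hIOS : ∀ t0' t', t0 ≤ t0' → t0' ≤ t' →
      ‖ξ t'‖ ≤ max (β ‖x t0'‖ (t' - t0')) (γ (supNorm r t0' t')))
    -- (ii) limsup_{s→0⁺} γ(s)/s < ∞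
    (hlimsup : Filter.limsup (fun s => ((γ s / s : ℝ) : EReal))
      (nhdsWithin 0 (Set.Ioi 0)) < ⊤)
    -- (iii) γ̄ ≥ ε·γ on (0,∞) for some ε > 1, and lim_{s→0⁺} γ̄(s)/s exists, positive, finite
    (ε : ℝ) (hε : 1 < ε) (hγbγ : ∀ s > 0, ε * γ s ≤ γb s)
    (hlim : ∃ C : ℝ, 0 < C ∧
      Filter.Tendsto (fun s => γb s / s) (nhdsWithin 0 (Set.Ioi 0)) (nhds C)) :
    (0 < ⨅ k : ℕ, (t (k + 1) - t k)) ∧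
      Filter.Tendsto x Filter.atTop (nhds 0) ∧
      Filter.Tendsto ξ Filter.atTop (nhds 0) ∧
      Filter.Tendsto r Filter.atTop (nhds 0) := by
  classical
  subst ht0
  obtain ⟨C, hC0, hCt⟩ := hlim
  -- abbreviations
  set B := β ‖x (t 0)‖ 0 with hBdef
  -- basic facts about the sampling sequence
  have htk : ∀ k, t k < t (k + 1) := fun k => hmono (Nat.lt_succ_self k)
  have ht0k : ∀ k, t 0 ≤ t k := fun k => hmono.monotone (Nat.zero_le k)
  have hr0 : ∀ k, r (t k) = 0 := by
    intro k
    rw [hr k (t k) ⟨le_refl _, htk k⟩, intervalIntegral.integral_same]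
  -- monotonicity helpers for class-K/KL functions
  have hmonoOn : ∀ {f : ℝ → ℝ}, StrictMonoOn f (Set.Ici 0) →
      ∀ {u v : ℝ}, 0 ≤ u → 0 ≤ v → u ≤ v → f u ≤ f v := by
    intro f hf u v hu hv huv
    rcases huv.lt_or_eq with h | h
    · exact (hf hu hv h).le
    · rw [h]
  have hγbmono := hγb.2.1
  have hγb0 : γb 0 = 0 := hγb.2.2.1
  have hγmono := hγ.2.1
  have hγ0 : γ 0 = 0 := hγ.2.2.1
  have hε0 : (0:ℝ) < ε := by linarith
  have hβnn : ∀ a d : ℝ, 0 ≤ a → 0 ≤ d → 0 ≤ β a d := by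
    intro a d ha hd
    have h := (hβ.1 d hd).2.2
    calc (0:ℝ) = β 0 d := h.symm
      _ ≤ β a d := hmonoOn (hβ.1 d hd).2.1 le_rfl ha ha
  have hβtnn : ∀ a d : ℝ, 0 ≤ a → 0 ≤ d → 0 ≤ βt a d := by
    intro a d ha hd
    have h := (hβt.1 d hd).2.2
    calc (0:ℝ) = βt 0 d := h.symm
      _ ≤ βt a d := hmonoOn (hβt.1 d hd).2.1 le_rfl ha ha
  have hBnn : 0 ≤ B := hβnn _ _ (norm_nonneg _) le_rfl
  -- surjectivity of γb on [0, ∞)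
  have hsurj : ∀ y : ℝ, 0 ≤ y → ∃ z, 0 ≤ z ∧ γb z = y := by
    intro y hy
    obtain ⟨z, hz1, hz2⟩ : ∃ z, 0 ≤ z ∧ y ≤ γb z := by
      obtain ⟨z, hz⟩ := ((hγb.2.2.2.eventually (eventually_ge_atTop y)).and
        (eventually_ge_atTop 0)).exists
      exact ⟨z, hz.2, hz.1⟩
    obtain ⟨w, hw, hweq⟩ := intermediate_value_Icc hz1 (hγb.1.mono (fun w hw => hw.1))
      (by rw [hγb0]; exact ⟨hy, hz2⟩)
    exact ⟨w, hw.1, hweq⟩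
  have hγbinv : ∀ u v : ℝ, 0 ≤ u → 0 ≤ v → γb u ≤ γb v → u ≤ v := by
    intro u v hu hv h
    by_contra hc
    push_neg at hc
    exact absurd (hγbmono hv hu hc) (not_lt.mpr h)
  have hγρ : ∀ ρ y : ℝ, 0 ≤ ρ → γb ρ = y → γ ρ ≤ y / ε := by
    intro ρ y hρ hρy
    rcases hρ.lt_or_eq with h | h
    · have := hγbγ ρ h
      rw [le_div_iff₀ hε0]
      calc γ ρ * ε = ε * γ ρ := by ring
        _ ≤ γb ρ := this
        _ = y := hρy
    · rw [← h, hγ0]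
      rw [← h] at hρy
      rw [hγb0] at hρy
      rw [← hρy]
      simp
  -- continuity of ξ on pieces and the sup of ‖ξ‖ over pieces
  have hξpc : ∀ a b : ℝ, t 0 ≤ a → ContinuousOn ξ (Set.Icc a b) :=
    fun a b ha => hξcont.mono (fun s hs => le_trans ha hs.1)
  have hMnn : ∀ k, 0 ≤ supNorm ξ (t k) (t (k + 1)) := fun k => supNorm_nonneg _ _ _
  have hξM : ∀ k, ∀ s ∈ Set.Icc (t k) (t (k + 1)), ‖ξ s‖ ≤ supNorm ξ (t k) (t (k + 1)) :=
    fun k s hs => le_supNorm_cont (hξpc _ _ (ht0k k)) hs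
  -- the fundamental integral bound on each piece
  have hrM : ∀ k, ∀ s ∈ Set.Icc (t k) (t (k + 1)),
      ‖r s‖ ≤ (s - t k) * supNorm ξ (t k) (t (k + 1)) := by
    intro k s hs
    rcases hs.2.lt_or_eq with hlt | he
    · rw [hr k s ⟨hs.1, hlt⟩]
      have hb : ∀ τ ∈ Set.uIoc (t k) s, ‖ξ τ‖ ≤ supNorm ξ (t k) (t (k + 1)) := by
        intro τ hτ
        rw [Set.uIoc_of_le hs.1] at hτ
        exact hξM k τ ⟨hτ.1.le, hτ.2.trans hs.2⟩
      have := intervalIntegral.norm_integral_le_of_norm_le_const hb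
      rwa [abs_of_nonneg (by linarith [hs.1]), mul_comm] at this
    · rw [he, hr0 (k + 1)]
      simp only [norm_zero]
      exact mul_nonneg (by linarith [hs.1, hs.2]) (hMnn k)
  have hrMk : ∀ k, ∀ s ∈ Set.Icc (t k) (t (k + 1)),
      ‖r s‖ ≤ (t (k + 1) - t k) * supNorm ξ (t k) (t (k + 1)) := by
    intro k s hs
    exact (hrM k s hs).trans (mul_le_mul_of_nonneg_right (by linarith [hs.2]) (hMnn k))
  -- extraction from the triggering law
  have htrigE : ∀ k : ℕ, ∀ η > (0:ℝ), ∃ u, t (k + 1) ≤ u ∧ u < t (k + 1) + η ∧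
      0 < supNorm r (t k) u ∧ (u - t k) * γb (supNorm r (t k) u) = supNorm r (t k) u := by
    intro k η hη
    have h1 : triggerTime γb r (t k) < ((t (k + 1) + η : ℝ) : EReal) := by
      rw [← htrig k]
      exact_mod_cast (by linarith : t (k + 1) < t (k + 1) + η)
    rw [triggerTime] at h1
    obtain ⟨y, hy, hylt⟩ := sInf_lt_iff.mp h1
    obtain ⟨u, hu, rfl⟩ := hy
    have hineq : ((t (k + 1) : ℝ) : EReal) ≤ (u : EReal) := by
      rw [htrig k, triggerTime]
      exact sInf_le ⟨u, hu, rfl⟩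
    refine ⟨u, by exact_mod_cast hineq, by exact_mod_cast hylt, ?_, hu.2.1⟩
    exact lt_of_le_of_ne (supNorm_nonneg _ _ _) (Ne.symm hu.2.2)
  -- the trigger value bound : γb (N k) ≤ M k
  have hγbN : ∀ k, γb (supNorm r (t k) (t (k + 1))) ≤ supNorm ξ (t k) (t (k + 1)) := by
    intro k
    refine le_of_forall_pos_le_add ?_
    intro ζ hζ
    set M1 := supNorm ξ (t k) (t (k + 1)) with hM1
    set M2 := supNorm ξ (t (k + 1)) (t (k + 2)) with hM2
    set η := min (ζ * (t (k + 1) - t k) / (M2 + 1)) (t (k + 2) - t (k + 1)) with hηdef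
    have hM2nn : 0 ≤ M2 := hMnn (k + 1)
    have hηpos : 0 < η := by
      apply lt_min
      · have h1 : 0 < t (k + 1) - t k := by linarith [htk k]
        positivity
      · linarith [htk (k + 1)]
    obtain ⟨u, hu1, hu2, hu3, hu4⟩ := htrigE k η hηpos
    have huk2 : u ≤ t (k + 2) := by
      have := min_le_right (ζ * (t (k + 1) - t k) / (M2 + 1)) (t (k + 2) - t (k + 1))
      rw [← hηdef] at this
      linarith
    have hptw : ∀ s ∈ Set.Icc (t k) u, ‖r s‖ ≤ max ((u - t k) * M1) (η * M2) := by
      intro s hsu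
      rcases le_or_gt s (t (k + 1)) with h | h
      · refine le_trans (hrM k s ⟨hsu.1, h⟩) (le_trans ?_ (le_max_left _ _))
        exact mul_le_mul_of_nonneg_right (by linarith [hsu.2, hu1]) (hMnn k)
      · refine le_trans (hrM (k + 1) s ⟨h.le, hsu.2.trans huk2⟩)
          (le_trans ?_ (le_max_right _ _))
        exact mul_le_mul_of_nonneg_right (by linarith [hsu.2, hu2]) hM2nn
    have hmaxnn : 0 ≤ max ((u - t k) * M1) (η * M2) := by
      refine le_trans ?_ (le_max_left _ _)
      exact mul_nonneg (by linarith [htk k, hu1]) (hMnn k)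
    have hNu : supNorm r (t k) u ≤ max ((u - t k) * M1) (η * M2) := supNorm_le hmaxnn hptw
    have hut : 0 < u - t k := by linarith [htk k, hu1]
    have step : γb (supNorm r (t k) u) ≤ M1 + ζ := by
      have hγbu : γb (supNorm r (t k) u) = supNorm r (t k) u / (u - t k) := by
        rw [eq_div_iff hut.ne']
        linarith [hu4]
      rw [hγbu, div_le_iff₀ hut]
      refine hNu.trans (max_le ?_ ?_)
      · nlinarith [hMnn k]
      · have hη1 : η ≤ ζ * (t (k + 1) - t k) / (M2 + 1) := min_le_left _ _
        have h2 : 0 < M2 + 1 := by linarith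
        have h3 : η * (M2 + 1) ≤ ζ * (t (k + 1) - t k) := by
          rw [← le_div_iff₀ h2]
          exact hη1
        have h4 : η * M2 ≤ ζ * (t (k + 1) - t k) := by nlinarith [hηpos.le]
        have h5 : ζ * (t (k + 1) - t k) ≤ ζ * (u - t k) := by
          apply mul_le_mul_of_nonneg_left _ hζ.le
          linarith [hu1]
        nlinarith [hMnn k, hut.le]
    have hNle : supNorm r (t k) (t (k + 1)) ≤ supNorm r (t k) u := by
      refine Real.sSup_le ?_ (supNorm_nonneg _ _ _)
      rintro z ⟨s, hsz, rfl⟩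
      exact le_supNorm hptw ⟨hsz.1, hsz.2.trans hu1⟩
    calc γb (supNorm r (t k) (t (k + 1))) ≤ γb (supNorm r (t k) u) :=
          hmonoOn hγbmono (supNorm_nonneg _ _ _) (supNorm_nonneg _ _ _) hNle
      _ ≤ M1 + ζ := step
  -- the global small-gain bound on ξ over any finite horizon
  have hΞ : ∀ K : ℕ, supNorm ξ (t 0) (t (K + 1)) ≤ B := by
    intro K
    set Ξ := supNorm ξ (t 0) (t (K + 1)) with hΞdef
    have hΞnn : 0 ≤ Ξ := supNorm_nonneg _ _ _
    obtain ⟨ρ, hρ0, hρeq⟩ := hsurj Ξ hΞnn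
    have hMΞ : ∀ k, k ≤ K → supNorm ξ (t k) (t (k + 1)) ≤ Ξ := by
      intro k hk
      refine Real.sSup_le ?_ hΞnn
      rintro z ⟨s, hs, rfl⟩
      refine le_supNorm_cont (hξpc _ _ le_rfl) ⟨(ht0k k).trans hs.1, ?_⟩
      exact hs.2.trans (hmono.monotone (by omega))
    have hNρ : ∀ k, k ≤ K → supNorm r (t k) (t (k + 1)) ≤ ρ := by
      intro k hk
      refine hγbinv _ _ (supNorm_nonneg _ _ _) hρ0 ?_
      rw [hρeq]
      exact (hγbN k).trans (hMΞ k hk)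
    have hrρ : ∀ s ∈ Set.Icc (t 0) (t (K + 1)), γ (supNorm r (t 0) s) ≤ Ξ / ε := by
      intro s hs
      have hsup : supNorm r (t 0) s ≤ ρ := by
        refine supNorm_le hρ0 ?_
        intro τ hτ
        rcases (hτ.2.trans hs.2).lt_or_eq with hl | heq
        · obtain ⟨k, hk1, hk2⟩ := exists_piece hmono hτ.1 hl
          have hkK : k ≤ K := by
            by_contra hh
            push_neg at hh
            have := hmono.monotone (show K + 1 ≤ k by omega)
            linarith
          exact (le_supNorm (hrMk k) ⟨hk1, hk2.le⟩).trans (hNρ k hkK)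
        · rw [heq, hr0 (K + 1)]
          simpa using hρ0
      calc γ (supNorm r (t 0) s) ≤ γ ρ :=
            hmonoOn hγmono (supNorm_nonneg _ _ _) hρ0 hsup
        _ ≤ Ξ / ε := hγρ ρ Ξ hρ0 hρeq
    refine small_gain hε hΞnn hBnn ?_
    refine supNorm_le (le_trans hBnn (le_max_left _ _)) ?_
    intro s hs
    refine (hIOS (t 0) s le_rfl hs.1).trans (max_le_max ?_ (hrρ s hs))
    exact (hβ.2 _ (norm_nonneg _)).1 Set.self_mem_Ici (Set.mem_Ici.mpr (by linarith [hs.1]))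
      (by linarith [hs.1])
  have hMB : ∀ k, supNorm ξ (t k) (t (k + 1)) ≤ B := by
    intro k
    refine le_trans ?_ (hΞ k)
    refine Real.sSup_le ?_ (supNorm_nonneg _ _ _)
    rintro z ⟨s, hs, rfl⟩
    exact le_supNorm_cont (hξpc _ _ le_rfl) ⟨(ht0k k).trans hs.1, hs.2⟩
  obtain ⟨R, hR0, hReq⟩ := hsurj B hBnn
  have hNR : ∀ k, supNorm r (t k) (t (k + 1)) ≤ R := by
    intro k
    refine hγbinv _ _ (supNorm_nonneg _ _ _) hR0 ?_
    rw [hReq]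
    exact (hγbN k).trans (hMB k)
  -- sup of r up to a point slightly beyond the next trigger is ≤ R
  have hrR : ∀ k u, t (k + 1) ≤ u → u ≤ t (k + 2) → supNorm r (t k) u ≤ R := by
    intro k u h1 h2
    refine supNorm_le hR0 ?_
    intro τ hτ
    rcases le_or_gt τ (t (k + 1)) with h | h
    · exact (le_supNorm (hrMk k) ⟨hτ.1, h⟩).trans (hNR k)
    · exact (le_supNorm (hrMk (k + 1)) ⟨h.le, hτ.2.trans h2⟩).trans (hNR (k + 1))
  have hrR0 : ∀ k u, t (k + 1) ≤ u → u ≤ t (k + 2) → supNorm r (t k) u ≤ R := hrR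
  have hRpos : 0 < R := by
    rcases hR0.lt_or_eq with h | h
    · exact h
    · exfalso
      obtain ⟨u, hu1, hu2, hu3, _⟩ := htrigE 0 (t (0 + 2) - t (0 + 1)) (by linarith [htk 1])
      have := hrR 0 u hu1 (by linarith)
      rw [← h] at this
      linarith
  -- uniform two-sided bounds on N/γb(N) for 0 < N ≤ R
  obtain ⟨δ, Δ, hδ, hΔ, hg⟩ : ∃ δ Δ : ℝ, 0 < δ ∧ 0 < Δ ∧ ∀ N : ℝ, 0 < N → N ≤ R →
      δ ≤ N / γb N ∧ N / γb N ≤ Δ := by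
    have hev : ∀ᶠ w in nhdsWithin (0:ℝ) (Set.Ioi 0), γb w / w ∈ Set.Ioo (C / 2) (2 * C) :=
      hCt (Ioo_mem_nhds (by linarith) (by linarith))
    rw [eventually_nhdsWithin_iff, Metric.eventually_nhds_iff] at hev
    obtain ⟨a, ha0, haP⟩ := hev
    have hnear : ∀ N : ℝ, 0 < N → N < a → 1 / (2 * C) ≤ N / γb N ∧ N / γb N ≤ 2 / C := by
      intro N h1 h2
      have hP := haP (y := N) (by rw [Real.dist_eq, sub_zero, abs_of_pos h1]; exact h2)
        (Set.mem_Ioi.mpr h1)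
      have hγbpos : 0 < γb N := by
        have h3 := hP.1
        have h4 : 0 < γb N / N := lt_trans (by positivity) h3
        exact (div_pos_iff.mp h4).resolve_right (fun hh => absurd h1 (not_lt.mpr hh.2.le)) |>.1
      constructor
      · rw [div_le_div_iff₀ (by positivity) hγbpos]
        have h3 : γb N < 2 * C * N := (div_lt_iff₀ h1).mp hP.2
        linarith
      · rw [div_le_div_iff₀ hγbpos hC0]
        have h3 : C / 2 * N < γb N := by
          have := hP.1
          calc C / 2 * N = (C / 2) * N := by ring
            _ < (γb N / N) * N := by exact mul_lt_mul_of_pos_right this h1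
            _ = γb N := by field_simp
        linarith
    rcases le_or_gt a R with haR | haR
    · have hγbposOn : ∀ w ∈ Set.Icc a R, 0 < γb w := by
        intro w hw
        have : γb 0 < γb w := hγbmono Set.self_mem_Ici
          (Set.mem_Ici.mpr (le_trans ha0.le hw.1)) (lt_of_lt_of_le ha0 hw.1)
        rwa [hγb0] at this
      have hcont : ContinuousOn (fun N => N / γb N) (Set.Icc a R) := by
        refine ContinuousOn.div continuousOn_id
          (hγb.1.mono (fun w hw => Set.mem_Ici.mpr (le_trans ha0.le hw.1))) ?_
        intro w hw
        exact (hγbposOn w hw).ne'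
      have hne : (Set.Icc a R).Nonempty := Set.nonempty_Icc.mpr haR
      obtain ⟨w1, hw1, hw1min⟩ := isCompact_Icc.exists_isMinOn hne hcont
      obtain ⟨w2, hw2, hw2max⟩ := isCompact_Icc.exists_isMaxOn hne hcont
      have hw1pos : 0 < w1 / γb w1 := div_pos (lt_of_lt_of_le ha0 hw1.1) (hγbposOn w1 hw1)
      refine ⟨min (1 / (2 * C)) (w1 / γb w1), max (2 / C) (w2 / γb w2), ?_, ?_, ?_⟩
      · exact lt_min (by positivity) hw1pos
      · exact lt_of_lt_of_le (by positivity) (le_max_left _ _)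
      · intro N h1 h2
        rcases lt_or_ge N a with h | h
        · obtain ⟨hl, hr'⟩ := hnear N h1 h
          exact ⟨(min_le_left _ _).trans hl, hr'.trans (le_max_left _ _)⟩
        · exact ⟨(min_le_right _ _).trans (hw1min ⟨h, h2⟩),
            (hw2max ⟨h, h2⟩).trans (le_max_right _ _)⟩
    · refine ⟨1 / (2 * C), 2 / C, by positivity, by positivity, ?_⟩
      intro N h1 h2
      exact hnear N h1 (lt_of_le_of_lt h2 haR)
  -- dwell-time bounds
  have hδτ : ∀ k, δ ≤ t (k + 1) - t k := by
    intro k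
    refine le_of_forall_pos_le_add ?_
    intro η hη
    have hη2 : 0 < min η (t (k + 2) - t (k + 1)) := lt_min hη (by linarith [htk (k + 1)])
    obtain ⟨u, hu1, hu2, hu3, hu4⟩ := htrigE k (min η (t (k + 2) - t (k + 1))) hη2
    have hNuR : supNorm r (t k) u ≤ R := by
      refine hrR k u hu1 ?_
      have := min_le_right η (t (k + 2) - t (k + 1))
      linarith
    have hγbNu : 0 < γb (supNorm r (t k) u) := by
      have := hγbmono Set.self_mem_Ici (Set.mem_Ici.mpr hu3.le) hu3
      rwa [hγb0] at this
    have hueq : u - t k = supNorm r (t k) u / γb (supNorm r (t k) u) := by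
      rw [eq_div_iff hγbNu.ne']
      linarith [hu4]
    have hδu : δ ≤ u - t k := by
      rw [hueq]
      exact (hg _ hu3 hNuR).1
    have := min_le_left η (t (k + 2) - t (k + 1))
    linarith
  have hτΔ : ∀ k, t (k + 1) - t k ≤ Δ := by
    intro k
    obtain ⟨u, hu1, hu2, hu3, hu4⟩ := htrigE k (t (k + 2) - t (k + 1)) (by linarith [htk (k + 1)])
    have hNuR : supNorm r (t k) u ≤ R := hrR k u hu1 (by linarith)
    have hγbNu : 0 < γb (supNorm r (t k) u) := by
      have := hγbmono Set.self_mem_Ici (Set.mem_Ici.mpr hu3.le) hu3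
      rwa [hγb0] at this
    have hueq : u - t k = supNorm r (t k) u / γb (supNorm r (t k) u) := by
      rw [eq_div_iff hγbNu.ne']
      linarith [hu4]
    have : u - t k ≤ Δ := by
      rw [hueq]
      exact (hg _ hu3 hNuR).2
    linarith [hu1]
  have hconc1 : 0 < ⨅ k : ℕ, (t (k + 1) - t k) := lt_of_lt_of_le hδ (le_ciInf hδτ)
  -- the sampling times tend to infinity
  have htop : Tendsto t atTop atTop := by
    have hlin : ∀ k : ℕ, t 0 + k * δ ≤ t k := by
      intro k
      induction k with
      | zero => simp
      | succ k ih =>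
        have := hδτ k
        push_cast
        push_cast at ih
        linarith
    refine tendsto_atTop_mono hlin ?_
    exact tendsto_atTop_add_const_left _ _ (tendsto_natCast_atTop_atTop.atTop_mul_const hδ)
  have hcov : ∀ s : ℝ, t 0 ≤ s → ∃ k, t k ≤ s ∧ s < t (k + 1) := by
    intro s hs
    obtain ⟨K, hK⟩ := (htop.eventually (eventually_gt_atTop s)).exists
    exact exists_piece hmono hs hK
  -- pieces after t j have index ≥ j
  have hidx : ∀ j k : ℕ, ∀ τ : ℝ, t j ≤ τ → τ < t (k + 1) → t k ≤ τ → j ≤ k := by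
    intro j k τ h1 h2 _
    by_contra hc
    push_neg at hc
    have := hmono.monotone (show k + 1 ≤ j by omega)
    linarith
  -- global bounds
  have hξB : ∀ s : ℝ, t 0 ≤ s → ‖ξ s‖ ≤ B := by
    intro s hs
    obtain ⟨k, hk1, hk2⟩ := hcov s hs
    exact (hξM k s ⟨hk1, hk2.le⟩).trans (hMB k)
  have hrRp : ∀ s : ℝ, t 0 ≤ s → ‖r s‖ ≤ R := by
    intro s hs
    obtain ⟨k, hk1, hk2⟩ := hcov s hs
    exact (le_supNorm (hrMk k) ⟨hk1, hk2.le⟩).trans (hNR k)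
  set X := max (βt ‖x (t 0)‖ 0) (γt R) with hXdef
  have hXnn : 0 ≤ X := le_trans (hβtnn _ _ (norm_nonneg _) le_rfl) (le_max_left _ _)
  have hXb : ∀ s : ℝ, t 0 ≤ s → ‖x s‖ ≤ X := by
    intro s hs
    refine (hISS (t 0) s le_rfl hs).trans (max_le_max ?_ ?_)
    · exact (hβt.2 _ (norm_nonneg _)).1 Set.self_mem_Ici (Set.mem_Ici.mpr (by linarith))
        (by linarith)
    · refine hmonoOn hγt.2.1 (supNorm_nonneg _ _ _) hR0 ?_
      exact supNorm_le hR0 (fun τ hτ => hrRp τ hτ.1)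
  -- tail suprema of ‖ξ‖
  set e : ℕ → ℝ := fun j => sSup ((fun s => ‖ξ s‖) '' Set.Ici (t j)) with hedef
  have heBdd : ∀ j, BddAbove ((fun s : ℝ => ‖ξ s‖) '' Set.Ici (t j)) :=
    fun j => ⟨B, by rintro z ⟨s, hs, rfl⟩; exact hξB s (le_trans (ht0k j) hs)⟩
  have hξe : ∀ j, ∀ s : ℝ, t j ≤ s → ‖ξ s‖ ≤ e j :=
    fun j s hs => le_csSup (heBdd j) ⟨s, hs, rfl⟩
  have henn : ∀ j, 0 ≤ e j := fun j => (norm_nonneg _).trans (hξe j (t j) le_rfl)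
  have hemn : ∀ i j, j ≤ i → e i ≤ e j := by
    intro i j hji
    refine csSup_le_csSup (heBdd j) ⟨_, ⟨t i, Set.self_mem_Ici, rfl⟩⟩ ?_
    rintro z ⟨s, hs, rfl⟩
    exact ⟨s, le_trans (hmono.monotone hji) hs, rfl⟩
  have hMe : ∀ j k, j ≤ k → supNorm ξ (t k) (t (k + 1)) ≤ e j := by
    intro j k hjk
    refine Real.sSup_le ?_ (henn j)
    rintro z ⟨s, hs, rfl⟩
    exact hξe j s (le_trans (hmono.monotone hjk) hs.1)
  -- key recursive estimate
  have hkey : ∀ j, ∀ s : ℝ, t j ≤ s → ‖ξ s‖ ≤ max (β X (s - t j)) (e j / ε) := by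
    intro j s hs
    refine (hIOS (t j) s (ht0k j) hs).trans (max_le_max ?_ ?_)
    · exact hmonoOn (hβ.1 _ (by linarith)).2.1 (norm_nonneg _) hXnn (hXb (t j) (ht0k j))
    · obtain ⟨ρ, hρ0, hρeq⟩ := hsurj (e j) (henn j)
      have hsup : supNorm r (t j) s ≤ ρ := by
        refine supNorm_le hρ0 ?_
        intro τ hτ
        obtain ⟨k, hk1, hk2⟩ := hcov τ (le_trans (ht0k j) hτ.1)
        have hjk : j ≤ k := hidx j k τ hτ.1 hk2 hk1
        refine (le_supNorm (hrMk k) ⟨hk1, hk2.le⟩).trans ?_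
        refine hγbinv _ _ (supNorm_nonneg _ _ _) hρ0 ?_
        rw [hρeq]
        exact (hγbN k).trans (hMe j k hjk)
      calc γ (supNorm r (t j) s) ≤ γ ρ :=
            hmonoOn hγmono (supNorm_nonneg _ _ _) hρ0 hsup
        _ ≤ e j / ε := hγρ ρ (e j) hρ0 hρeq
  have hβXnn : ∀ d : ℝ, 0 ≤ d → 0 ≤ β X d := fun d hd => hβnn _ _ hXnn hd
  -- the infimum of tail suprema is 0
  have heBddBelow : BddBelow (Set.range e) := ⟨0, by rintro z ⟨j, rfl⟩; exact henn j⟩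
  have hℓe : ∀ j, (⨅ i, e i) ≤ e j / ε := by
    intro j
    by_contra hcon
    push_neg at hcon
    have hℓpos : (0:ℝ) < ⨅ i, e i := lt_of_le_of_lt (div_nonneg (henn j) hε0.le) hcon
    have hβtend : Tendsto (fun s : ℝ => β X (s - t j)) atTop (nhds 0) := by
      have h1 : Tendsto (fun s : ℝ => s - t j) atTop atTop :=
        tendsto_atTop_add_const_right atTop (-(t j)) tendsto_id
      exact ((hβ.2 X hXnn).2).comp h1
    have hev : ∀ᶠ s : ℝ in atTop, β X (s - t j) < ⨅ i, e i :=
      hβtend.eventually (gt_mem_nhds hℓpos)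
    obtain ⟨k, hk1, hk2⟩ := ((htop.eventually hev).and (eventually_ge_atTop j)).exists
    have hek : e k ≤ max (β X (t k - t j)) (e j / ε) := by
      refine Real.sSup_le ?_ (le_trans (div_nonneg (henn j) hε0.le) (le_max_right _ _))
      rintro z ⟨s, hsz, rfl⟩
      have hsz' : t k ≤ s := hsz
      refine (hkey j s (le_trans (hmono.monotone hk2) hsz')).trans
        (max_le_max ?_ le_rfl)
      refine (hβ.2 X hXnn).1 (Set.mem_Ici.mpr ?_) (Set.mem_Ici.mpr ?_) (by linarith)
      · linarith [hmono.monotone hk2]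
      · linarith [hmono.monotone hk2]
    have hle : (⨅ i, e i) ≤ e k := ciInf_le heBddBelow k
    rcases le_max_iff.mp (hle.trans hek) with h | h
    · linarith
    · linarith
  have hℓ0 : (⨅ j, e j) = 0 := by
    have h1 : ∀ j, (⨅ i, e i) * ε ≤ e j := by
      intro j
      exact (le_div_iff₀ hε0).mp (hℓe j)
    have h2 : (⨅ i, e i) * ε ≤ ⨅ j, e j := le_ciInf h1
    have h3 : 0 ≤ ⨅ j, e j := le_ciInf henn
    nlinarith
  have hesmall : ∀ η : ℝ, 0 < η → ∃ j, e j < η := by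
    intro η hη
    have : (⨅ j, e j) < η := by rw [hℓ0]; exact hη
    exact exists_lt_of_ciInf_lt this
  -- conclusion: ξ → 0
  have hconcξ : Tendsto ξ atTop (nhds 0) := by
    rw [Metric.tendsto_atTop]
    intro η hη
    obtain ⟨j, hj⟩ := hesmall η hη
    exact ⟨t j, fun s hs => by rw [dist_zero_right]; exact lt_of_le_of_lt (hξe j s hs) hj⟩
  -- conclusion: r → 0
  have hconcr : Tendsto r atTop (nhds 0) := by
    rw [Metric.tendsto_atTop]
    intro η hη
    obtain ⟨j, hj⟩ := hesmall (η / Δ) (by positivity)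
    refine ⟨t j, fun s hs => ?_⟩
    rw [dist_zero_right]
    obtain ⟨k, hk1, hk2⟩ := hcov s (le_trans (ht0k j) hs)
    have hjk : j ≤ k := hidx j k s hs hk2 hk1
    calc ‖r s‖ ≤ (s - t k) * supNorm ξ (t k) (t (k + 1)) := hrM k s ⟨hk1, hk2.le⟩
      _ ≤ Δ * e j := by
          refine mul_le_mul ?_ (hMe j k hjk) (hMnn k) hΔ.le
          linarith [hτΔ k, hk2]
      _ < η := by
          have := (lt_div_iff₀' hΔ).mp hj
          linarith
  -- conclusion: x → 0
  have hconcx : Tendsto x atTop (nhds 0) := by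
    rw [Metric.tendsto_atTop]
    intro η hη
    -- continuity of γt at 0 from the right
    obtain ⟨a, ha, haP⟩ : ∃ a > (0:ℝ), ∀ y : ℝ, 0 ≤ y → y ≤ a → γt y < η := by
      have h0 : ContinuousWithinAt γt (Set.Ici 0) 0 := hγt.1 0 Set.self_mem_Ici
      have h1 : Tendsto γt (nhdsWithin 0 (Set.Ici 0)) (nhds 0) := by
        have := h0.tendsto
        rwa [hγt.2.2.1] at this
      have hev : ∀ᶠ y in nhdsWithin (0:ℝ) (Set.Ici 0), γt y < η :=
        h1.eventually (gt_mem_nhds hη)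
      rw [eventually_nhdsWithin_iff, Metric.eventually_nhds_iff] at hev
      obtain ⟨a, ha0, haP⟩ := hev
      refine ⟨a / 2, by positivity, fun y hy1 hy2 => ?_⟩
      exact haP (by rw [Real.dist_eq, sub_zero, abs_of_nonneg hy1]; linarith)
        (Set.mem_Ici.mpr hy1)
    obtain ⟨j, hj⟩ := hesmall (a / Δ) (by positivity)
    have hrtail : ∀ s : ℝ, t j ≤ s → ‖r s‖ ≤ a := by
      intro s hs
      obtain ⟨k, hk1, hk2⟩ := hcov s (le_trans (ht0k j) hs)
      have hjk : j ≤ k := hidx j k s hs hk2 hk1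
      calc ‖r s‖ ≤ (s - t k) * supNorm ξ (t k) (t (k + 1)) := hrM k s ⟨hk1, hk2.le⟩
        _ ≤ Δ * e j := by
            refine mul_le_mul ?_ (hMe j k hjk) (hMnn k) hΔ.le
            linarith [hτΔ k, hk2]
        _ ≤ a := by
            have := (lt_div_iff₀' hΔ).mp hj
            linarith
    have hβttend : Tendsto (fun s : ℝ => βt X (s - t j)) atTop (nhds 0) := by
      have h1 : Tendsto (fun s : ℝ => s - t j) atTop atTop :=
        tendsto_atTop_add_const_right atTop (-(t j)) tendsto_id
      exact ((hβt.2 X hXnn).2).comp h1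
    obtain ⟨T0, hT0⟩ := eventually_atTop.mp (hβttend.eventually (gt_mem_nhds hη))
    refine ⟨max T0 (t j), fun s hs => ?_⟩
    rw [dist_zero_right]
    have hs1 : t j ≤ s := le_trans (le_max_right _ _) hs
    have hs2 : T0 ≤ s := le_trans (le_max_left _ _) hs
    have h1 := hISS (t j) s (ht0k j) hs1
    have hsup : supNorm r (t j) s ≤ a := supNorm_le ha.le (fun τ hτ => hrtail τ hτ.1)
    have h2 : γt (supNorm r (t j) s) < η := haP _ (supNorm_nonneg _ _ _) hsup
    have h3 : βt ‖x (t j)‖ (s - t j) ≤ βt X (s - t j) :=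
      hmonoOn (hβt.1 _ (by linarith)).2.1 (norm_nonneg _) hXnn (hXb (t j) (ht0k j))
    refine lt_of_le_of_lt h1 (max_lt (lt_of_le_of_lt h3 (hT0 s hs2)) h2)
  exact ⟨hconc1, hconcx, hconcξ, hconcr⟩
end

section
/- Let γ̄ be a class K∞ function such that lim_{s→0⁺} γ̄(s)/s exists and equals C with 0 < C < ∞. Let t_k ∈ ℝ and let r : [t_k,∞) → ℝᵐ be continuous with r(t_k) = 0. Then the next triggering time t_{k+1} := inf{ t > t_k : (t − t_k)·γ̄(‖r_[t_k,t]‖) = ‖r_[t_k,t]‖ and ‖r_[t_k,t]‖ ≠ 0 } (with inf ∅ = +∞) satisfies t_{k+1} > t_k. -/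
open Filter Set

/-- First step of the proof of Theorem 1: the inter-sampling interval is strictly positive. -/
theorem trigger_time_positive {m : ℕ} (γb : ℝ → ℝ) (hγb : IsClassKInf γb)
    (C : ℝ) (hC : 0 < C)
    (hlim : Filter.Tendsto (fun s => γb s / s) (nhdsWithin 0 (Set.Ioi 0)) (nhds C))
    (tk : ℝ) (r : ℝ → EuclideanSpace ℝ (Fin m))
    (hrcont : ContinuousOn r (Set.Ici tk)) (hr0 : r tk = 0) :
    (tk : EReal) < triggerTime γb r tk := by
  -- Step 1: bound γb s / s near 0
  have hev := hlim.eventually_lt_const (show C < C + 1 by linarith)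
  rw [eventually_nhdsWithin_iff, Metric.eventually_nhds_iff] at hev
  obtain ⟨δ, hδ, hδbound⟩ := hev
  -- Step 2: continuity of ‖r‖ at tk
  have hc : Filter.Tendsto (fun τ => ‖r τ‖) (nhdsWithin tk (Set.Ici tk)) (nhds 0) := by
    have h := (hrcont tk (Set.self_mem_Ici)).norm
    simpa [ContinuousWithinAt, hr0] using h
  have h2 := hc.eventually_lt_const (show (0:ℝ) < δ/2 by linarith)
  rw [eventually_nhdsWithin_iff, Metric.eventually_nhds_iff] at h2
  obtain ⟨ε1, hε1, hr_small⟩ := h2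
  set ε : ℝ := min (ε1/2) (1/(2*(C+1))) with hεdef
  have hCpos : (0:ℝ) < C + 1 := by linarith
  have hεpos : 0 < ε := lt_min (by linarith) (by positivity)
  have key : ∀ t : ℝ, tk < t ∧ (t - tk) * γb (supNorm r tk t) = supNorm r tk t ∧
      supNorm r tk t ≠ 0 → tk + ε ≤ t := by
    rintro t ⟨htk, heq, hne⟩
    by_contra hlt
    push_neg at hlt
    have htε : t - tk < ε := by linarith
    set S := supNorm r tk t with hS
    -- every value in the image is < δ/2
    have hbound : ∀ x ∈ (fun τ => ‖r τ‖) '' Set.Icc tk t, x ≤ δ/2 := by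
      rintro x ⟨τ, ⟨hτ1, hτ2⟩, rfl⟩
      have : dist τ tk < ε1 := by
        rw [Real.dist_eq, abs_of_nonneg (by linarith)]
        have : ε ≤ ε1/2 := min_le_left _ _
        linarith
      exact le_of_lt (hr_small this hτ1)
    have hSδ : S ≤ δ/2 := Real.sSup_le hbound (by linarith)
    have hmem : (0:ℝ) ∈ (fun τ => ‖r τ‖) '' Set.Icc tk t := by
      refine ⟨tk, ⟨le_rfl, le_of_lt htk⟩, ?_⟩
      simp [hr0]
    have hSnonneg : (0:ℝ) ≤ S :=
      le_csSup ⟨δ/2, fun x hx => hbound x hx⟩ hmem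
    have hSpos : 0 < S := lt_of_le_of_ne hSnonneg (Ne.symm hne)
    have hdivlt : γb S / S < C + 1 := by
      apply hδbound
      · rw [Real.dist_eq, sub_zero, abs_of_pos hSpos]; linarith
      · exact hSpos
    have hγpos : γb S < (C+1) * S := by
      have := (div_lt_iff₀ hSpos).mp hdivlt
      linarith
    have hεle : ε ≤ 1/(2*(C+1)) := min_le_right _ _
    have httk : 0 < t - tk := by linarith
    -- S = (t-tk) * γb S < ε * (C+1) * S ≤ S/2, contradiction
    have hγSpos : 0 < γb S := by
      by_contra hle
      push_neg at hle
      nlinarith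
    have h1 : S < ε * ((C+1) * S) := by
      calc S = (t - tk) * γb S := heq.symm
        _ < ε * ((C+1) * S) := by nlinarith
    have h2 : ε * ((C+1) * S) ≤ S/2 := by
      have : ε * ((C+1) * S) ≤ (1/(2*(C+1))) * ((C+1) * S) := by
        apply mul_le_mul_of_nonneg_right hεle
        positivity
      calc ε * ((C+1) * S) ≤ (1/(2*(C+1))) * ((C+1) * S) := this
        _ = S/2 := by field_simp
    linarith
  have hle : ((tk + ε : ℝ) : EReal) ≤ triggerTime γb r tk := by
    apply le_sInf
    rintro x ⟨t, ht, rfl⟩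
    exact EReal.coe_le_coe_iff.2 (key t ht)
  calc (tk : EReal) < ((tk + ε : ℝ) : EReal) := EReal.coe_lt_coe_iff.2 (by linarith)
    _ ≤ _ := hle
end

section
/- Let t₀ ∈ ℝ and let {t_k}_{k≥0} be a strictly increasing unbounded sequence with first element t₀. Let ξ : [t₀,∞) → ℝᵐ be continuous and define r(t) = ∫_{t_k}^{t} ξ(s) ds for t ∈ [t_k, t_{k+1}). Let a ≥ 0 be a constant, β a class KL function, γ a class K∞ function, ε > 1, and γ̄ a class K∞ function with γ̄(s) ≥ ε·γ(s) for all s > 0. Assume that ‖ξ(t)‖ ≤ max{β(a, t − t₀), γ(‖r_[t₀,t]‖)} for all t ≥ t₀, and that (t − t_k)·γ̄(‖r_[t_k,t]‖) ≤ ‖r_[t_k,t]‖ for every k and every t ∈ [t_k, t_{k+1}). Then sup_{t ≥ t₀} ‖ξ(t)‖ ≤ β(a, 0). -/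
open Filter Set

/-- Boundedness of the auxiliary output ξ in the proof of Theorem 1:
`sup_{t ≥ t₀} ‖ξ(t)‖ ≤ β(a, 0)`. -/
theorem aux_output_bounded {m : ℕ} (t0 : ℝ) (t : ℕ → ℝ) (ht0 : t 0 = t0)
    (hmono : StrictMono t) (hunbdd : Filter.Tendsto t Filter.atTop Filter.atTop)
    (ξ r : ℝ → EuclideanSpace ℝ (Fin m)) (hξcont : ContinuousOn ξ (Set.Ici t0))
    (hr : ∀ k : ℕ, ∀ s ∈ Set.Ico (t k) (t (k + 1)), r s = ∫ τ in (t k)..s, ξ τ)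
    (a : ℝ) (ha : 0 ≤ a) (β : ℝ → ℝ → ℝ) (hβ : IsClassKL β)
    (γ γb : ℝ → ℝ) (hγ : IsClassKInf γ) (hγb : IsClassKInf γb)
    (ε : ℝ) (hε : 1 < ε) (hγbγ : ∀ s > 0, ε * γ s ≤ γb s)
    (hbound : ∀ τ, t0 ≤ τ → ‖ξ τ‖ ≤ max (β a (τ - t0)) (γ (supNorm r t0 τ)))
    (htrig : ∀ k : ℕ, ∀ τ ∈ Set.Ico (t k) (t (k + 1)),
      (τ - t k) * γb (supNorm r (t k) τ) ≤ supNorm r (t k) τ) :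
    ∀ τ, t0 ≤ τ → ‖ξ τ‖ ≤ β a 0 := by
  classical
  intro τ₀ hτ₀
  have hεpos : (0:ℝ) < ε := by linarith
  -- index finding
  have hfind : ∀ s, t0 ≤ s → ∃ k, t k ≤ s ∧ s < t (k + 1) := by
    intro s hs
    have h1 : ∃ n, s < t n := (hunbdd.eventually_gt_atTop s).exists
    have hn₀ : s < t (Nat.find h1) := Nat.find_spec h1
    have hne : Nat.find h1 ≠ 0 := by
      intro h
      rw [h, ht0] at hn₀; linarith
    obtain ⟨k, hk⟩ := Nat.exists_eq_succ_of_ne_zero hne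
    refine ⟨k, ?_, ?_⟩
    · have := Nat.find_min h1 (by omega : k < Nat.find h1)
      push_neg at this; exact this
    · rw [hk] at hn₀; exact hn₀
  have hIne : (Set.Icc t0 τ₀).Nonempty := ⟨t0, le_refl _, hτ₀⟩
  have hcont : ContinuousOn (fun x => ‖ξ x‖) (Set.Icc t0 τ₀) :=
    (hξcont.mono Set.Icc_subset_Ici_self).norm
  have hbddξ : BddAbove ((fun x => ‖ξ x‖) '' Set.Icc t0 τ₀) :=
    (isCompact_Icc.image_of_continuousOn hcont).bddAbove
  set S := sSup ((fun x => ‖ξ x‖) '' Set.Icc t0 τ₀) with hSdef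
  have hSle : ∀ x ∈ Set.Icc t0 τ₀, ‖ξ x‖ ≤ S := fun x hx => le_csSup hbddξ ⟨x, hx, rfl⟩
  have hS0 : 0 ≤ S := le_trans (norm_nonneg _) (hSle t0 ⟨le_refl _, hτ₀⟩)
  have htkge : ∀ k : ℕ, t0 ≤ t k := by
    intro k
    have := hmono.monotone (Nat.zero_le k); rwa [ht0] at this
  -- r is bounded on [t0, τ₀]
  have hrbd : ∀ u, t0 ≤ u → u ≤ τ₀ → ‖r u‖ ≤ S * (τ₀ - t0) := by
    intro u hu1 hu2
    obtain ⟨k, hk1, hk2⟩ := hfind u hu1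
    rw [hr k u ⟨hk1, hk2⟩]
    have hb : ‖∫ τ in (t k)..u, ξ τ‖ ≤ S * |u - t k| := by
      apply intervalIntegral.norm_integral_le_of_norm_le_const
      intro x hx
      rw [Set.uIoc_of_le hk1] at hx
      exact hSle x ⟨le_trans (htkge k) (le_of_lt hx.1), le_trans hx.2 hu2⟩
    refine hb.trans ?_
    rw [abs_of_nonneg (sub_nonneg.mpr hk1)]
    have : u - t k ≤ τ₀ - t0 := by have := htkge k; linarith
    nlinarith
  have hrbdd : ∀ c d, t0 ≤ c → d ≤ τ₀ → BddAbove ((fun u => ‖r u‖) '' Set.Icc c d) := by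
    intro c d hc hd
    refine ⟨S * (τ₀ - t0), ?_⟩
    rintro x ⟨u, hu, rfl⟩
    exact hrbd u (le_trans hc hu.1) (le_trans hu.2 hd)
  have hsupnonneg : ∀ c d, t0 ≤ c → c ≤ d → d ≤ τ₀ → 0 ≤ supNorm r c d := by
    intro c d hc hcd hd
    exact le_trans (norm_nonneg (r c))
      (le_csSup (hrbdd c d hc hd) ⟨c, ⟨le_refl _, hcd⟩, rfl⟩)
  set N := supNorm r t0 τ₀ with hNdef
  have hNnonneg : 0 ≤ N := hsupnonneg t0 τ₀ le_rfl hτ₀ le_rfl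
  have hsub : ∀ s, t0 ≤ s → s ≤ τ₀ → supNorm r t0 s ≤ N := by
    intro s h1 h2
    unfold supNorm
    refine csSup_le_csSup (hrbdd t0 τ₀ le_rfl le_rfl) ?_ ?_
    · exact Set.Nonempty.image _ ⟨t0, le_rfl, h1⟩
    · exact Set.image_mono (Set.Icc_subset_Icc le_rfl h2)
  have hγmono : MonotoneOn γ (Set.Ici 0) := hγ.2.1.monotoneOn
  -- pointwise bound on γ ‖r s‖
  have hpoint : ∀ s, t0 ≤ s → s ≤ τ₀ → ε * γ ‖r s‖ ≤ S := by
    intro s hs1 hs2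
    obtain ⟨k, hk1, hk2⟩ := hfind s hs1
    set M := supNorm r (t k) s with hMdef
    have hMbdd : BddAbove ((fun u => ‖r u‖) '' Set.Icc (t k) s) := hrbdd (t k) s (htkge k) hs2
    have hrsM : ‖r s‖ ≤ M := le_csSup hMbdd ⟨s, ⟨hk1, le_rfl⟩, rfl⟩
    have hM0 : 0 ≤ M := (norm_nonneg _).trans hrsM
    have hMle : M ≤ S * (s - t k) := by
      rw [hMdef]
      unfold supNorm
      refine csSup_le ?_ ?_
      · exact Set.Nonempty.image _ ⟨t k, le_rfl, hk1⟩
      rintro x ⟨u, ⟨hu1, hu2⟩, rfl⟩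
      show ‖r u‖ ≤ S * (s - t k)
      rw [hr k u ⟨hu1, lt_of_le_of_lt hu2 hk2⟩]
      have hb : ‖∫ τ in (t k)..u, ξ τ‖ ≤ S * |u - t k| := by
        apply intervalIntegral.norm_integral_le_of_norm_le_const
        intro x hx
        rw [Set.uIoc_of_le hu1] at hx
        exact hSle x ⟨le_trans (htkge k) (le_of_lt hx.1), le_trans (le_trans hx.2 hu2) hs2⟩
      rw [abs_of_nonneg (sub_nonneg.mpr hu1)] at hb
      nlinarith [sub_nonneg.mpr hu1]
    have hγrsM : γ ‖r s‖ ≤ γ M :=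
      hγmono (Set.mem_Ici.mpr (norm_nonneg _)) (Set.mem_Ici.mpr hM0) hrsM
    rcases eq_or_lt_of_le hM0 with hM0' | hMpos
    · have hrs0 : ‖r s‖ = 0 := le_antisymm (by rw [← hM0'] at hrsM; exact hrsM) (norm_nonneg _)
      rw [hrs0, hγ.2.2.1]
      nlinarith
    · have htrig' := htrig k s ⟨hk1, hk2⟩
      have hsk : 0 < s - t k := by
        by_contra h
        push_neg at h
        nlinarith [mul_nonpos_of_nonneg_of_nonpos hS0 h]
      have hγbM : γb M ≤ S := by
        rw [← hMdef] at htrig'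
        nlinarith [htrig', hMle]
      have hεγ : ε * γ M ≤ γb M := hγbγ M hMpos
      nlinarith
  -- find K with γ K = S / ε
  have hKex : ∃ K, 0 ≤ K ∧ γ K = S / ε := by
    have hSε : 0 ≤ S / ε := div_nonneg hS0 (le_of_lt hεpos)
    obtain ⟨c, hc⟩ := Filter.eventually_atTop.mp (hγ.2.2.2.eventually_ge_atTop (S / ε))
    have hb0 : (0:ℝ) ≤ max c 0 := le_max_right c 0
    have hγb' : S / ε ∈ Set.Icc (γ 0) (γ (max c 0)) := by
      constructor
      · rw [hγ.2.2.1]; exact hSε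
      · exact hc (max c 0) (le_max_left c 0)
    have := intermediate_value_Icc hb0 (hγ.1.mono Set.Icc_subset_Ici_self)
    obtain ⟨K, hK, hγK⟩ := this hγb'
    exact ⟨K, hK.1, hγK⟩
  obtain ⟨K, hK0, hγK⟩ := hKex
  have hrK : ∀ s, t0 ≤ s → s ≤ τ₀ → ‖r s‖ ≤ K := by
    intro s h1 h2
    by_contra h
    push_neg at h
    have hlt : γ K < γ ‖r s‖ :=
      hγ.2.1 (Set.mem_Ici.mpr hK0) (Set.mem_Ici.mpr (norm_nonneg _)) h
    have hp := hpoint s h1 h2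
    rw [hγK, div_lt_iff₀ hεpos] at hlt
    nlinarith
  have hNK : N ≤ K := by
    rw [hNdef]
    unfold supNorm
    refine csSup_le ?_ ?_
    · exact Set.Nonempty.image _ ⟨t0, le_rfl, hτ₀⟩
    rintro x ⟨u, hu, rfl⟩
    exact hrK u hu.1 hu.2
  have hγN : ε * γ N ≤ S := by
    have h := hγmono (Set.mem_Ici.mpr hNnonneg) (Set.mem_Ici.mpr hK0) hNK
    rw [hγK, le_div_iff₀ hεpos] at h
    nlinarith
  have hR0 : 0 ≤ β a 0 := by
    have h0 : β 0 0 = 0 := (hβ.1 0 le_rfl).2.2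
    have h1 := (hβ.1 0 le_rfl).2.1.monotoneOn (Set.mem_Ici.mpr le_rfl) (Set.mem_Ici.mpr ha) ha
    rw [h0] at h1
    exact h1
  have hβanti := (hβ.2 a ha).1
  have hSbound : S ≤ max (β a 0) (γ N) := by
    apply csSup_le (hIne.image _)
    rintro x ⟨u, hu, rfl⟩
    have h1 := hbound u hu.1
    have h2 : β a (u - t0) ≤ β a 0 :=
      hβanti (Set.mem_Ici.mpr le_rfl) (Set.mem_Ici.mpr (sub_nonneg.mpr hu.1)) (sub_nonneg.mpr hu.1)
    have h3 : γ (supNorm r t0 u) ≤ γ N :=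
      hγmono (Set.mem_Ici.mpr (hsupnonneg t0 u le_rfl hu.1 hu.2)) (Set.mem_Ici.mpr hNnonneg)
        (hsub u hu.1 hu.2)
    exact h1.trans (max_le_max h2 h3)
  have hfin : ‖ξ τ₀‖ ≤ S := hSle τ₀ ⟨hτ₀, le_rfl⟩
  rcases le_max_iff.mp hSbound with h | h
  · linarith
  · have hS0' : S ≤ 0 := by nlinarith
    linarith
end

section
/- Under the hypotheses of the previous statement (strictly increasing unbounded sampling sequence {t_k} starting at t₀, continuous ξ, r(t) = ∫_{t_k}^{t} ξ(s) ds on each [t_k, t_{k+1}), ‖ξ(t)‖ ≤ max{β(a, t − t₀), γ(‖r_[t₀,t]‖)} for all t ≥ t₀ with β of class KL and γ of class K∞, γ̄ of class K∞ with γ̄ ≥ ε·γ on (0,∞) for some ε > 1, and (t − t_k)·γ̄(‖r_[t_k,t]‖) ≤ ‖r_[t_k,t]‖ on each inter-sampling interval), assume additionally that for some class KL function β̃ and class K∞ function γ̃, ‖x(t)‖ ≤ max{β̃(‖x(t₀)‖, t − t₀), γ̃(‖r_[t₀,t]‖)} for all t ≥ t₀ and a = ‖x(t₀)‖. Then for all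 t ≥ t₀: ‖r_[t₀,t]‖ ≤ γ̄⁻¹(β(‖x(t₀)‖, 0)) and ‖x(t)‖ ≤ max{β̃(‖x(t₀)‖, 0), γ̃(γ̄⁻¹(β(‖x(t₀)‖, 0)))}, where γ̄⁻¹ denotes the inverse of γ̄. -/
open Filter Set

/-- Explicit bounds on the auxiliary input `r` and the state `x` in the proof of
Theorem 1, from which Lyapunov stability of the origin follows. -/
theorem aux_input_and_state_bounds {n m : ℕ} (t0 : ℝ) (t : ℕ → ℝ) (ht0 : t 0 = t0)
    (hmono : StrictMono t) (hunbdd : Filter.Tendsto t Filter.atTop Filter.atTop)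
    (x : ℝ → EuclideanSpace ℝ (Fin n))
    (ξ r : ℝ → EuclideanSpace ℝ (Fin m)) (hξcont : ContinuousOn ξ (Set.Ici t0))
    (hr : ∀ k : ℕ, ∀ s ∈ Set.Ico (t k) (t (k + 1)), r s = ∫ τ in (t k)..s, ξ τ)
    (β βt : ℝ → ℝ → ℝ) (hβ : IsClassKL β) (hβt : IsClassKL βt)
    (γ γt γb : ℝ → ℝ) (hγ : IsClassKInf γ) (hγt : IsClassKInf γt) (hγb : IsClassKInf γb)
    (ε : ℝ) (hε : 1 < ε) (hγbγ : ∀ s > 0, ε * γ s ≤ γb s)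
    (hbound : ∀ τ, t0 ≤ τ → ‖ξ τ‖ ≤ max (β ‖x t0‖ (τ - t0)) (γ (supNorm r t0 τ)))
    (htrig : ∀ k : ℕ, ∀ τ ∈ Set.Ico (t k) (t (k + 1)),
      (τ - t k) * γb (supNorm r (t k) τ) ≤ supNorm r (t k) τ)
    (hISS : ∀ τ, t0 ≤ τ → ‖x τ‖ ≤ max (βt ‖x t0‖ (τ - t0)) (γt (supNorm r t0 τ)))
    -- γ̄⁻¹ : the inverse of γ̄ on [0,∞)
    (γbinv : ℝ → ℝ) (hinv1 : ∀ s, 0 ≤ s → γbinv (γb s) = s)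
    (hinv2 : ∀ s, 0 ≤ s → 0 ≤ γbinv s ∧ γb (γbinv s) = s) :
    ∀ τ, t0 ≤ τ →
      supNorm r t0 τ ≤ γbinv (β ‖x t0‖ 0) ∧
      ‖x τ‖ ≤ max (βt ‖x t0‖ 0) (γt (γbinv (β ‖x t0‖ 0))) := by
  set a := ‖x t0‖ with ha_def
  have ha : (0:ℝ) ≤ a := norm_nonneg _
  have hβa0 : (0:ℝ) ≤ β a 0 := by
    have h0 := hβ.1 0 le_rfl
    have := h0.2.1.monotoneOn (self_mem_Ici) (mem_Ici.2 ha) ha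
    simpa [h0.2.2] using this
  have htk0 : ∀ k, t0 ≤ t k := fun k => ht0 ▸ hmono.monotone (Nat.zero_le k)
  -- interval localization
  have hfind : ∀ u, t0 ≤ u → ∃ k, t k ≤ u ∧ u < t (k + 1) := by
    intro u hu
    have hex : ∃ n, u < t n := (hunbdd.eventually (eventually_gt_atTop u)).exists
    classical
    set N := Nat.find hex with hN
    have hNpos : N ≠ 0 := by
      intro h
      have := Nat.find_spec hex
      rw [← hN, h, ht0] at this
      exact absurd this (not_lt.2 hu)
    obtain ⟨K, hK⟩ := Nat.exists_eq_succ_of_ne_zero hNpos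
    refine ⟨K, ?_, ?_⟩
    · have := Nat.find_min hex (m := K) (by omega)
      exact not_lt.1 this
    · have := Nat.find_spec hex
      rw [← hN, hK] at *
      exact this
  -- r vanishes at sampling times
  have hrtk : ∀ k, r (t k) = 0 := by
    intro k
    rw [hr k (t k) ⟨le_rfl, hmono (Nat.lt_succ_self k)⟩, intervalIntegral.integral_same]
  -- uniform bound of r on each sampling interval
  have hpiece : ∀ k, ∃ C, ∀ v ∈ Ico (t k) (t (k + 1)), ‖r v‖ ≤ C := by
    intro k
    have hcompact : IsCompact (Icc (t k) (t (k + 1))) := isCompact_Icc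
    have hcont : ContinuousOn ξ (Icc (t k) (t (k + 1))) :=
      hξcont.mono (fun y hy => le_trans (htk0 k) hy.1)
    obtain ⟨M, hM⟩ := hcompact.exists_bound_of_continuousOn hcont
    have hM0 : 0 ≤ M :=
      le_trans (norm_nonneg _) (hM (t k) ⟨le_rfl, (hmono (Nat.lt_succ_self k)).le⟩)
    refine ⟨M * (t (k + 1) - t k), ?_⟩
    intro v hv
    rw [hr k v hv]
    have h1 : ‖∫ τ in (t k)..v, ξ τ‖ ≤ M * |v - t k| := by
      apply intervalIntegral.norm_integral_le_of_norm_le_const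
      intro y hy
      rw [Set.uIoc_of_le hv.1] at hy
      exact hM y ⟨hy.1.le, hy.2.trans hv.2.le⟩
    refine h1.trans ?_
    rw [abs_of_nonneg (sub_nonneg.2 hv.1)]
    exact mul_le_mul_of_nonneg_left (by linarith [hv.2]) hM0
  -- boundedness of the norm of r on compact intervals
  have hIcoBdd : ∀ N : ℕ, BddAbove ((fun τ => ‖r τ‖) '' Ico t0 (t N)) := by
    intro N
    induction N with
    | zero => rw [ht0]; simp
    | succ N ih =>
      have hsub : Ico t0 (t (N + 1)) = Ico t0 (t N) ∪ Ico (t N) (t (N + 1)) :=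
        (Set.Ico_union_Ico_eq_Ico (htk0 N) (hmono (Nat.lt_succ_self N)).le).symm
      rw [hsub, Set.image_union]
      refine BddAbove.union ih ?_
      obtain ⟨C, hC⟩ := hpiece N
      exact ⟨C, fun y hy => by obtain ⟨v, hv, rfl⟩ := hy; exact hC v hv⟩
  have hbdd : ∀ s, BddAbove ((fun τ => ‖r τ‖) '' Icc t0 s) := by
    intro s
    have hex : ∃ N : ℕ, s < t N := (hunbdd.eventually (eventually_gt_atTop s)).exists
    obtain ⟨N, hN⟩ := hex
    exact (hIcoBdd N).mono (Set.image_mono (Set.Icc_subset_Ico_right hN))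
  -- basic properties of the running sup
  have hRnonneg : ∀ b c : ℝ, 0 ≤ supNorm r b c := by
    intro b c
    exact Real.sSup_nonneg (fun y hy => by obtain ⟨v, _, rfl⟩ := hy; exact norm_nonneg _)
  have hRmono : ∀ s1 s2 : ℝ, t0 ≤ s1 → s1 ≤ s2 → supNorm r t0 s1 ≤ supNorm r t0 s2 := by
    intro s1 s2 h1 h2
    unfold supNorm
    exact csSup_le_csSup (hbdd s2) (⟨‖r t0‖, ⟨t0, ⟨le_rfl, h1⟩, rfl⟩⟩)
      (Set.image_mono (Set.Icc_subset_Icc le_rfl h2))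
  have hγb_mono := hγb.2.1.monotoneOn
  have hγ_mono := hγ.2.1.monotoneOn
  -- key pointwise bound
  have key : ∀ s, t0 ≤ s → ∀ u ∈ Icc t0 s,
      ‖r u‖ ≤ γbinv (max (β a 0) (γ (supNorm r t0 s))) := by
    intro s hs u hu
    set C := max (β a 0) (γ (supNorm r t0 s)) with hCdef
    have hC : (0:ℝ) ≤ C := le_trans hβa0 (le_max_left _ _)
    obtain ⟨k, hk1, hk2⟩ := hfind u hu.1
    set S := supNorm r (t k) u with hSdef
    have hrS : ‖r u‖ ≤ S := by
      refine le_csSup ?_ ⟨u, ⟨hk1, le_rfl⟩, rfl⟩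
      exact (hbdd s).mono (Set.image_mono (Set.Icc_subset_Icc (htk0 k) hu.2))
    have hSnonneg : 0 ≤ S := hRnonneg _ _
    have hSle : S ≤ (u - t k) * C := by
      refine Real.sSup_le ?_ (mul_nonneg (sub_nonneg.2 hk1) hC)
      rintro y ⟨v, hv, rfl⟩
      show ‖r v‖ ≤ (u - t k) * C
      have hvIco : v ∈ Ico (t k) (t (k + 1)) := ⟨hv.1, lt_of_le_of_lt hv.2 hk2⟩
      rw [hr k v hvIco]
      have h1 : ‖∫ τ in (t k)..v, ξ τ‖ ≤ C * |v - t k| := by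
        apply intervalIntegral.norm_integral_le_of_norm_le_const
        intro y hy
        rw [Set.uIoc_of_le hv.1] at hy
        have hy0 : t0 ≤ y := le_trans (htk0 k) hy.1.le
        refine (hbound y hy0).trans (max_le ?_ ?_)
        · refine le_trans ((hβ.2 a ha).1 self_mem_Ici (mem_Ici.2 (sub_nonneg.2 hy0))
            (sub_nonneg.2 hy0)) (le_max_left _ _)
        · refine le_trans (hγ_mono (mem_Ici.2 (hRnonneg _ _)) (mem_Ici.2 (hRnonneg _ _))
            (hRmono y s hy0 (le_trans hy.2 (le_trans hv.2 hu.2)))) (le_max_right _ _)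
      refine h1.trans ?_
      rw [abs_of_nonneg (sub_nonneg.2 hv.1), mul_comm]
      exact mul_le_mul_of_nonneg_right (by linarith [hv.2]) hC
    have hγbru : γb ‖r u‖ ≤ C := by
      rcases eq_or_lt_of_le hSnonneg with hS0 | hSpos
      · have hru0 : ‖r u‖ = 0 := le_antisymm (hrS.trans hS0.symm.le) (norm_nonneg _)
        rw [hru0, hγb.2.2.1]
        exact hC
      · have htku : t k < u := by
          rcases eq_or_lt_of_le hk1 with h | h
          · exfalso
            have : S = 0 := by
              rw [hSdef, ← h]
              unfold supNorm
              rw [Set.Icc_self, Set.image_singleton, csSup_singleton, hrtk k, norm_zero]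
            linarith
          · exact h
        have htr := htrig k u ⟨hk1, hk2⟩
        have hγbS : γb S ≤ C := by
          have h2 : (u - t k) * γb S ≤ (u - t k) * C := le_trans htr hSle
          exact le_of_mul_le_mul_left h2 (sub_pos.2 htku)
        exact le_trans (hγb_mono (mem_Ici.2 (norm_nonneg _)) (mem_Ici.2 hSnonneg) hrS) hγbS
    have hinvC := hinv2 C hC
    have : γb ‖r u‖ ≤ γb (γbinv C) := by rw [hinvC.2]; exact hγbru
    exact (hγb.2.1.le_iff_le (mem_Ici.2 (norm_nonneg _)) (mem_Ici.2 hinvC.1)).mp this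
  -- sup bound
  have hRs : ∀ s, t0 ≤ s → supNorm r t0 s ≤ γbinv (β a 0) := by
    intro s hs
    set Rs := supNorm r t0 s with hRsdef
    set C := max (β a 0) (γ Rs) with hCdef
    have hC : (0:ℝ) ≤ C := le_trans hβa0 (le_max_left _ _)
    have h1 : Rs ≤ γbinv C := by
      refine Real.sSup_le ?_ (hinv2 C hC).1
      rintro y ⟨u, hu, rfl⟩
      exact key s hs u hu
    have hRsnn : 0 ≤ Rs := hRnonneg _ _
    have h2 : γb Rs ≤ C := by
      have := hγb_mono (mem_Ici.2 hRsnn) (mem_Ici.2 (hinv2 C hC).1) h1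
      rwa [(hinv2 C hC).2] at this
    have h3 : γb Rs ≤ β a 0 := by
      rcases eq_or_lt_of_le hRsnn with h0 | hpos
      · rw [← h0, hγb.2.2.1]; exact hβa0
      · rcases le_or_gt (γ Rs) (β a 0) with hle | hlt
        · rwa [hCdef, max_eq_left hle] at h2
        · exfalso
          have hγpos : 0 < γ Rs := by
            have := hγ.2.1 self_mem_Ici (mem_Ici.2 hRsnn) hpos
            rwa [hγ.2.2.1] at this
          have hεγ := hγbγ Rs hpos
          have : ε * γ Rs ≤ γ Rs := le_trans hεγ (by rwa [hCdef, max_eq_right hlt.le] at h2)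
          nlinarith
    have : γb Rs ≤ γb (γbinv (β a 0)) := by rw [(hinv2 _ hβa0).2]; exact h3
    exact (hγb.2.1.le_iff_le (mem_Ici.2 hRsnn) (mem_Ici.2 (hinv2 _ hβa0).1)).mp this
  intro τ hτ
  refine ⟨hRs τ hτ, ?_⟩
  refine (hISS τ hτ).trans (max_le_max ?_ ?_)
  · exact (hβt.2 a ha).1 self_mem_Ici (mem_Ici.2 (sub_nonneg.2 hτ)) (sub_nonneg.2 hτ)
  · exact hγt.2.1.monotoneOn (mem_Ici.2 (hRnonneg _ _))
      (mem_Ici.2 (hinv2 _ hβa0).1) (hRs τ hτ)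
end

section
/- Let γ̄ be a class K∞ function such that lim_{s→0⁺} γ̄(s)/s exists and is positive and finite. Let t_k ∈ ℝ, let r : [t_k,∞) → ℝᵐ be continuous with r(t_k) = 0 and ‖r_[t_k,t]‖ > 0 for all t > t_k, and set r_∞ := sup_{t ≥ t_k} ‖r(t)‖ < ∞. Let T_max > 0 be such that γ̄(s)/s ≥ 1/T_max for all s ∈ (0, r_∞]. Then the triggering time t_{k+1} := inf{ t > t_k : (t − t_k)·γ̄(‖r_[t_k,t]‖) = ‖r_[t_k,t]‖ and ‖r_[t_k,t]‖ ≠ 0 } satisfies t_{k+1} ≤ t_k + T_max. -/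
open Filter Set

private lemma runningSup_continuousOn {g : ℝ → ℝ} {tk : ℝ} (hg : ContinuousOn g (Ici tk)) :
    ContinuousOn (fun t => sSup (g '' Icc tk t)) (Ici tk) := by
  intro t0 ht0
  rw [Metric.continuousWithinAt_iff]
  intro ε hε
  obtain ⟨δ, hδ, hδ'⟩ := Metric.continuousWithinAt_iff.1 (hg t0 ht0) (ε/4) (by linarith)
  refine ⟨δ, hδ, ?_⟩
  intro t' ht' hd
  have key : ∀ a b : ℝ, tk ≤ a → a ≤ b → dist b t0 < δ → dist a t0 < δ →
      sSup (g '' Icc tk b) ≤ sSup (g '' Icc tk a) + ε/2 := by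
    intro a b ha hab hdb hda
    have hbdd : BddAbove (g '' Icc tk a) :=
      (isCompact_Icc.image_of_continuousOn (hg.mono (Icc_subset_Ici_self))).bddAbove
    have hne : (g '' Icc tk a).Nonempty := (nonempty_Icc.2 ha).image _
    apply csSup_le ((nonempty_Icc.2 (ha.trans hab)).image _)
    rintro x ⟨τ, ⟨hτ1, hτ2⟩, rfl⟩
    rcases le_or_gt τ a with h | h
    · have : g τ ≤ sSup (g '' Icc tk a) := le_csSup hbdd ⟨τ, ⟨hτ1, h⟩, rfl⟩
      linarith
    · have hτδ : dist τ t0 < δ := by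
        rw [Real.dist_eq] at *
        rw [abs_lt] at *
        constructor <;> nlinarith [hda.1, hda.2, hdb.1, hdb.2]
      have h1 : dist (g τ) (g t0) < ε/4 := hδ' (le_trans ha h.le) hτδ
      have h2 : dist (g a) (g t0) < ε/4 := hδ' ha hda
      have h3 : g a ≤ sSup (g '' Icc tk a) := le_csSup hbdd ⟨a, ⟨ha, le_refl _⟩, rfl⟩
      rw [Real.dist_eq, abs_lt] at h1 h2
      linarith
  have hmono : ∀ a b : ℝ, tk ≤ a → a ≤ b → sSup (g '' Icc tk a) ≤ sSup (g '' Icc tk b) := by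
    intro a b ha hab
    exact csSup_le_csSup (isCompact_Icc.image_of_continuousOn
      (hg.mono Icc_subset_Ici_self)).bddAbove ((nonempty_Icc.2 ha).image _)
      (image_mono (Icc_subset_Icc le_rfl hab))
  rw [Real.dist_eq, abs_lt]
  have hd0 : dist t0 t0 < δ := by simpa using hδ
  rcases le_or_gt t' t0 with h | h
  · have h1 := key t' t0 ht' h hd0 hd
    have h2 := hmono t' t0 ht' h
    constructor <;> linarith
  · have h1 := key t0 t' ht0 h.le hd hd0
    have h2 := hmono t0 t' ht0 h.le
    constructor <;> linarith

/-- The upper bound (18) on the inter-sampling intervals in the proof of Theorem 1: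
`T_max` is an upper bound of the sampling interval. -/
theorem trigger_time_upper_bound {m : ℕ} (γb : ℝ → ℝ) (hγb : IsClassKInf γb)
    (C : ℝ) (hC : 0 < C)
    (hlim : Filter.Tendsto (fun s => γb s / s) (nhdsWithin 0 (Set.Ioi 0)) (nhds C))
    (tk : ℝ) (r : ℝ → EuclideanSpace ℝ (Fin m))
    (hrcont : ContinuousOn r (Set.Ici tk)) (hr0 : r tk = 0)
    (hpos : ∀ t, tk < t → 0 < supNorm r tk t)
    (hbdd : BddAbove ((fun τ => ‖r τ‖) '' Set.Ici tk))
    (rinf : ℝ) (hrinf : rinf = sSup ((fun τ => ‖r τ‖) '' Set.Ici tk))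
    (Tmax : ℝ) (hTmax : 0 < Tmax)
    (hTbound : ∀ s, 0 < s → s ≤ rinf → 1 / Tmax ≤ γb s / s) :
    triggerTime γb r tk ≤ ((tk + Tmax : ℝ) : EReal) := by
  set g : ℝ → ℝ := fun τ => ‖r τ‖ with hg
  set M : ℝ → ℝ := fun t => sSup (g '' Icc tk t) with hM
  have hMsup : ∀ t, supNorm r tk t = M t := fun t => rfl
  have hgcont : ContinuousOn g (Ici tk) := hrcont.norm
  have hMcont : ContinuousOn M (Ici tk) := runningSup_continuousOn hgcont
  have hgtk : g tk = 0 := by simp [hg, hr0]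
  have hMtk : M tk = 0 := by
    simp [hM, Icc_self, hgtk]
  have hMnonneg : ∀ t, tk ≤ t → 0 ≤ M t := by
    intro t ht
    have : g tk ≤ M t := le_csSup
      (isCompact_Icc.image_of_continuousOn (hgcont.mono Icc_subset_Ici_self)).bddAbove
      ⟨tk, ⟨le_refl _, ht⟩, rfl⟩
    rwa [hgtk] at this
  have hMrinf : ∀ t, tk ≤ t → M t ≤ rinf := by
    intro t ht
    rw [hrinf]
    exact csSup_le_csSup hbdd ((nonempty_Icc.2 ht).image _)
      (image_mono Icc_subset_Ici_self)
  -- δ such that γb s / s < 2C for s ∈ (0, δ)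
  have h2C : ∀ᶠ s in nhdsWithin 0 (Set.Ioi 0), γb s / s < 2*C :=
    hlim.eventually_lt_const (by linarith)
  rw [eventually_nhdsWithin_iff, Metric.eventually_nhds_iff] at h2C
  obtain ⟨δ, hδpos, hδ⟩ := h2C
  -- η such that M t < δ for t ∈ [tk, tk+η)
  obtain ⟨η, hηpos, hη⟩ := Metric.continuousWithinAt_iff.1 (hMcont tk (self_mem_Ici)) δ hδpos
  set ε0 : ℝ := min (min η (1/(2*C))) Tmax with hε0
  have hε0pos : 0 < ε0 := lt_min (lt_min hηpos (by positivity)) hTmax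
  set a : ℝ := tk + ε0/2 with ha
  set b : ℝ := tk + Tmax with hb
  have htka : tk < a := by simp [ha]; linarith
  have hab : a ≤ b := by
    have : ε0 ≤ Tmax := min_le_right _ _
    simp [ha, hb]; linarith
  have htkb : tk < b := lt_of_lt_of_le htka hab
  clear_value ε0 a b
  set f : ℝ → ℝ := fun t => (t - tk) * γb (M t) - M t with hf
  -- f a < 0
  have hMa : 0 < M a := hpos a htka
  have hMaδ : M a < δ := by
    have h1 : dist a tk < η := by
      rw [Real.dist_eq]
      have hεη : ε0 ≤ η := by rw [hε0]; exact le_trans (min_le_left _ _) (min_le_left _ _)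
      have haa : a - tk = ε0/2 := by rw [ha]; ring
      rw [abs_of_pos (by linarith)]
      linarith
    have := hη (le_of_lt htka) h1
    rw [hMtk, Real.dist_eq, sub_zero, abs_of_pos hMa] at this
    exact this
  have hγMa : γb (M a) / M a < 2*C := by
    apply hδ (y := M a) ?_ (mem_Ioi.2 hMa)
    rw [Real.dist_eq, sub_zero, abs_of_pos hMa]
    exact hMaδ
  have hγMapos : 0 < γb (M a) := by
    have := hγb.2.1 (self_mem_Ici) (le_of_lt hMa : (0:ℝ) ≤ M a) hMa
    rwa [hγb.2.2.1] at this
  have hfa : f a < 0 := by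
    have h1 : a - tk < 1/(2*C) := by
      have : ε0 ≤ 1/(2*C) := by rw [hε0]; exact le_trans (min_le_left _ _) (min_le_right _ _)
      have haa : a - tk = ε0/2 := by rw [ha]; ring
      linarith
    have h2 : γb (M a) < 2*C * M a := by
      rwa [div_lt_iff₀ hMa] at hγMa
    have h3 : (a - tk) * γb (M a) < (1/(2*C)) * (2*C * M a) := by
      apply mul_lt_mul' (le_of_lt h1) h2 (le_of_lt hγMapos) (by positivity)
    rw [one_div, inv_mul_cancel_left₀ (by positivity : (2*C) ≠ 0)] at h3
    simp only [hf]
    linarith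
  -- f b ≥ 0
  have hMb : 0 < M b := hpos b htkb
  have hfb : 0 ≤ f b := by
    have h1 : 1 / Tmax ≤ γb (M b) / M b := hTbound (M b) hMb (hMrinf b (le_of_lt htkb))
    have h2 : M b ≤ Tmax * γb (M b) := by
      rw [div_le_div_iff₀ hTmax hMb] at h1
      linarith
    have h3 : b - tk = Tmax := by simp [hb]
    simp only [hf, h3]
    linarith
  -- continuity of f on [a, b]
  have hsub : Icc a b ⊆ Ici tk := fun t ht => le_trans (le_of_lt htka) ht.1
  have hMcont' : ContinuousOn M (Icc a b) := hMcont.mono hsub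
  have hγM : ContinuousOn (fun t => γb (M t)) (Icc a b) :=
    hγb.1.comp hMcont' (fun t ht => hMnonneg t (hsub ht))
  have hfcont : ContinuousOn f (Icc a b) :=
    (((continuousOn_id.sub continuousOn_const).mul hγM).sub hMcont')
  -- IVT
  have h0mem : (0:ℝ) ∈ Icc (f a) (f b) := ⟨le_of_lt hfa, hfb⟩
  obtain ⟨t, htmem, hft⟩ := intermediate_value_Icc hab hfcont h0mem
  have htkt : tk < t := lt_of_lt_of_le htka htmem.1
  have heq : (t - tk) * γb (supNorm r tk t) = supNorm r tk t := by
    rw [hMsup]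
    have : (t - tk) * γb (M t) - M t = 0 := hft
    linarith
  have hne : supNorm r tk t ≠ 0 := by
    rw [hMsup]; exact ne_of_gt (hpos t htkt)
  have h1 : triggerTime γb r tk ≤ ((t : ℝ) : EReal) :=
    sInf_le (mem_image_of_mem _ ⟨htkt, heq, hne⟩)
  have h2 : t ≤ b := htmem.2
  exact h1.trans (EReal.coe_le_coe_iff.2 h2)
end

section
/- Let T_max > 0, R ≥ 0, c ≥ 0, ε > 1, let β be a class KL function, and let ζ : (0,∞) → [0, R] be a function satisfying ζ(t) ≤ max{ β(c, t/4), (1/ε)·ζ(t/2), (1/ε)·ζ(t/4) } for all t ≥ 8·T_max. Then ζ(t) → 0 as t → ∞. -/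
open Filter Set

/-- The key asymptotic-gain recursion (22) in the proof of Theorem 1:
a bounded function satisfying the contraction recursion tends to zero. -/
theorem asymptotic_gain_recursion (Tmax R c ε : ℝ)
    (hTmax : 0 < Tmax) (hR : 0 ≤ R) (hc : 0 ≤ c) (hε : 1 < ε)
    (β : ℝ → ℝ → ℝ) (hβ : IsClassKL β)
    (ζ : ℝ → ℝ) (hζ : ∀ t, 0 < t → ζ t ∈ Set.Icc 0 R)
    (hrec : ∀ t, 8 * Tmax ≤ t →
      ζ t ≤ max (β c (t / 4)) (max ((1 / ε) * ζ (t / 2)) ((1 / ε) * ζ (t / 4)))) :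
    Filter.Tendsto ζ Filter.atTop (nhds 0) := by
  have hε0 : 0 < ε := lt_trans one_pos hε
  have hbdd : IsBoundedUnder (· ≤ ·) atTop ζ := by
    refine ⟨R, ?_⟩
    rw [eventually_map]
    filter_upwards [eventually_gt_atTop (0:ℝ)] with t ht using (hζ t ht).2
  have hbdd' : IsBoundedUnder (· ≥ ·) atTop ζ := by
    refine ⟨0, ?_⟩
    rw [eventually_map]
    filter_upwards [eventually_gt_atTop (0:ℝ)] with t ht using (hζ t ht).1
  set L := limsup ζ atTop with hLdef
  have hβ0 : Tendsto (fun t => β c t) atTop (nhds 0) := (hβ.2 c hc).2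
  have hhalf : Tendsto (fun t : ℝ => t / 2) atTop atTop :=
    tendsto_id.atTop_div_const (by norm_num)
  have hquarter : Tendsto (fun t : ℝ => t / 4) atTop atTop :=
    tendsto_id.atTop_div_const (by norm_num)
  have hLle : L ≤ 0 := by
    by_contra hL
    push_neg at hL
    set δ : ℝ := L * (ε - 1) / (2 * ε) with hδdef
    set a : ℝ := L * (1 + ε) / 2 with hadef
    have hδpos : 0 < δ := by
      apply div_pos (mul_pos hL (by linarith)) (by linarith)
    have hLa : L < a := by
      rw [hadef]
      nlinarith
    have hE2 : ∀ᶠ t in atTop, β c (t / 4) ≤ δ := by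
      have := hquarter.eventually (hβ0.eventually (eventually_le_nhds hδpos))
      exact this
    have hev : ∀ᶠ t in atTop, ζ t < a :=
      eventually_lt_of_limsup_lt hLa hbdd
    have hE3 : ∀ᶠ t in atTop, ζ (t / 2) < a := hhalf.eventually hev
    have hE4 : ∀ᶠ t in atTop, ζ (t / 4) < a := hquarter.eventually hev
    have hmain : ∀ᶠ t in atTop, ζ t ≤ max δ ((1 / ε) * a) := by
      filter_upwards [eventually_ge_atTop (8 * Tmax), hE2, hE3, hE4]
        with t ht h2 h3 h4
      refine le_trans (hrec t ht) ?_
      have h1e : (0:ℝ) ≤ 1 / ε := by positivity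
      refine max_le (le_max_of_le_left h2) (max_le ?_ ?_)
      · exact le_max_of_le_right (mul_le_mul_of_nonneg_left h3.le h1e)
      · exact le_max_of_le_right (mul_le_mul_of_nonneg_left h4.le h1e)
    have hLle2 : L ≤ max δ ((1 / ε) * a) :=
      limsup_le_of_le hbdd'.isCoboundedUnder_le hmain
    have hfin : max δ ((1 / ε) * a) < L := by
      apply max_lt
      · rw [hδdef, div_lt_iff₀ (by linarith : (0:ℝ) < 2 * ε)]
        nlinarith
      · rw [hadef, div_mul_eq_mul_div, one_mul, div_div,
          div_lt_iff₀ (by positivity : (0:ℝ) < 2 * ε)]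
        nlinarith
    exact absurd hLle2 (not_le.mpr hfin)
  have hIle : (0:ℝ) ≤ liminf ζ atTop := by
    apply le_liminf_of_le hbdd.isCoboundedUnder_ge
    filter_upwards [eventually_gt_atTop (0:ℝ)] with t ht using (hζ t ht).1
  have hIL : liminf ζ atTop ≤ L := liminf_le_limsup hbdd hbdd'
  have h1 : liminf ζ atTop = 0 := le_antisymm (le_trans hIL hLle) hIle
  have h2 : limsup ζ atTop = 0 := le_antisymm hLle (le_trans hIle hIL)
  exact tendsto_of_liminf_eq_limsup h1 h2 hbdd hbdd'
end

section
/- Let β_z, β_x be class KL functions and γ_z^x, γ_z^r, γ_x^z, γ_x^r class K∞ functions satisfying the small-gain condition γ_z^x(γ_x^z(s)) < s for all s > 0. Then there exist class KL functions β̄_z, β̄_x, depending only on these functions, with the following property: for every t₀ ∈ ℝ and all continuous signals z : [t₀,∞) → ℝ^q, x : [t₀,∞) → ℝⁿ and every bounded piecewise-continuous r : [t₀,∞) → ℝᵐ such that for all t₀ ≤ t₀′ ≤ t, ‖z(t)‖ ≤ max{β_z(‖z(t₀′)‖, t−t₀′), γ_z^x(‖x_[t₀′,t]‖), γ_z^r(‖r_[t₀′,t]‖)}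 and ‖x(t)‖ ≤ max{β_x(‖x(t₀′)‖, t−t₀′), γ_x^z(‖z_[t₀′,t]‖), γ_x^r(‖r_[t₀′,t]‖)}, one has for all t ≥ t₀, with Λ(t₀) := (z(t₀), x(t₀)) ∈ ℝ^{q+n}: ‖z(t)‖ ≤ max{β̄_z(‖Λ(t₀)‖, t−t₀), γ̄_z^r(‖r_[t₀,t]‖)} and ‖x(t)‖ ≤ max{β̄_x(‖Λ(t₀)‖, t−t₀), γ̄_x^r(‖r_[t₀,t]‖)}, where γ̄_z^r := max{γ_z^r, γ_z^x ∘ γ_x^r} and γ̄_x^r := max{γ_x^r, γ_x^z ∘ γ_z^r}. -/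
open Filter Set

section Helpers

variable {γ : ℝ → ℝ} {β : ℝ → ℝ → ℝ}

lemma kinf_mono (h : IsClassKInf γ) {a b : ℝ} (ha : 0 ≤ a) (hab : a ≤ b) : γ a ≤ γ b :=
  h.2.1.monotoneOn ha (le_trans ha hab) hab

lemma kinf_nonneg (h : IsClassKInf γ) {a : ℝ} (ha : 0 ≤ a) : 0 ≤ γ a :=
  h.2.2.1 ▸ kinf_mono h le_rfl ha

lemma kinf_max_le (h : IsClassKInf γ) {a b : ℝ} (ha : 0 ≤ a) (hb : 0 ≤ b) :
    γ (max a b) ≤ max (γ a) (γ b) := by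
  rcases max_cases a b with ⟨he, _⟩ | ⟨he, _⟩ <;> rw [he] <;> [exact le_max_left _ _;
    exact le_max_right _ _]

lemma kl_mono (h : IsClassKL β) {a b t : ℝ} (ha : 0 ≤ a) (hab : a ≤ b) (ht : 0 ≤ t) :
    β a t ≤ β b t :=
  (h.1 t ht).2.1.monotoneOn ha (le_trans ha hab) hab

lemma kl_nonneg (h : IsClassKL β) {a t : ℝ} (ha : 0 ≤ a) (ht : 0 ≤ t) : 0 ≤ β a t :=
  (h.1 t ht).2.2 ▸ kl_mono h le_rfl ha ht

lemma kl_anti (h : IsClassKL β) {s a b : ℝ} (hs : 0 ≤ s) (ha : 0 ≤ a) (hab : a ≤ b) :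
    β s b ≤ β s a :=
  (h.2 s hs).1 ha (le_trans ha hab) hab

end Helpers

section SupNorm

variable {E : Type*} [NormedAddCommGroup E] {v : ℝ → E} {a b c d t0 : ℝ}

lemma le_supNorm_s11 (hbdd : BddAbove ((fun τ => ‖v τ‖) '' Set.Icc a b)) {τ : ℝ}
    (hτ : τ ∈ Set.Icc a b) : ‖v τ‖ ≤ supNorm v a b :=
  le_csSup hbdd ⟨τ, hτ, rfl⟩

lemma supNorm_nonneg_s11 (hbdd : BddAbove ((fun τ => ‖v τ‖) '' Set.Icc a b)) (hab : a ≤ b) :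
    0 ≤ supNorm v a b :=
  le_trans (norm_nonneg _) (le_supNorm_s11 hbdd ⟨le_rfl, hab⟩)

lemma supNorm_le_s11 (hab : a ≤ b) {C : ℝ} (h : ∀ τ ∈ Set.Icc a b, ‖v τ‖ ≤ C) :
    supNorm v a b ≤ C :=
  csSup_le (⟨‖v a‖, a, ⟨le_rfl, hab⟩, rfl⟩) (by rintro y ⟨τ, hτ, rfl⟩; exact h τ hτ)

lemma supNorm_mono (hbdd : BddAbove ((fun τ => ‖v τ‖) '' Set.Icc a b))
    (hsub : Set.Icc c d ⊆ Set.Icc a b) (hcd : c ≤ d) : supNorm v c d ≤ supNorm v a b :=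
  csSup_le_csSup hbdd (⟨‖v c‖, c, ⟨le_rfl, hcd⟩, rfl⟩) (Set.image_mono hsub)

lemma bdd_of_continuousOn (hv : ContinuousOn v (Set.Ici t0)) (ha : t0 ≤ a) :
    BddAbove ((fun τ => ‖v τ‖) '' Set.Icc a b) :=
  (isCompact_Icc.image_of_continuousOn
    ((hv.mono (fun τ hτ => le_trans ha hτ.1)).norm)).bddAbove

lemma bdd_of_bdd (hr : BddAbove ((fun τ => ‖v τ‖) '' Set.Ici t0)) (ha : t0 ≤ a) :
    BddAbove ((fun τ => ‖v τ‖) '' Set.Icc a b) :=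
  hr.mono (Set.image_mono (fun τ hτ => le_trans ha hτ.1))

end SupNorm
section SG
variable {γ1 γ2 : ℝ → ℝ}

lemma kinf_pos (h : IsClassKInf γ1) {s : ℝ} (hs : 0 < s) : 0 < γ1 s := by
  have := h.2.1 (Set.self_mem_Ici (a := (0:ℝ))) (le_of_lt hs : (0:ℝ) ≤ s) hs
  rwa [h.2.2.1] at this

lemma sg_swap (h1 : IsClassKInf γ1) (h2 : IsClassKInf γ2)
    (hsg : ∀ s > 0, γ1 (γ2 s) < s) : ∀ s > 0, γ2 (γ1 s) < s := by
  intro s hs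
  by_contra hle
  push_neg at hle
  have h1 : γ1 s ≤ γ1 (γ2 (γ1 s)) := kinf_mono h1 hs.le hle
  have h2 : γ1 (γ2 (γ1 s)) < γ1 s := hsg _ (kinf_pos ‹IsClassKInf γ1› hs)
  linarith

lemma sg_le (h1 : IsClassKInf γ1) (h2 : IsClassKInf γ2)
    (hsg : ∀ s > 0, γ1 (γ2 s) < s) : ∀ s, 0 ≤ s → γ1 (γ2 s) ≤ s := by
  intro s hs
  rcases eq_or_lt_of_le hs with h | h
  · rw [← h, h2.2.2.1, h1.2.2.1]
  · exact (hsg s h).le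

lemma absorb {u A : ℝ} {f : ℝ → ℝ} (hu : 0 ≤ u) (hA : 0 ≤ A)
    (hq : ∀ s > 0, f s < s) (h : u ≤ max A (f u)) : u ≤ A := by
  rcases le_or_gt u A with h' | h'
  · exact h'
  · have hu0 : 0 < u := lt_of_le_of_lt hA h'
    have := hq u hu0
    rcases max_cases A (f u) with ⟨he, _⟩ | ⟨he, _⟩ <;> rw [he] at h <;> linarith

lemma sg_iterate (h1 : IsClassKInf γ1) (h2 : IsClassKInf γ2)
    (hsg : ∀ s > 0, γ1 (γ2 s) < s) (c : ℝ) (hc : 0 ≤ c) {ε : ℝ} (hε : 0 < ε) :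
    ∃ k : ℕ, (fun s => γ1 (γ2 s))^[k] c ≤ ε := by
  set f : ℝ → ℝ := fun s => γ1 (γ2 s) with hf
  set w : ℕ → ℝ := fun k => f^[k] c with hw
  have hwnn : ∀ k, 0 ≤ w k := by
    intro k
    induction k with
    | zero => exact hc
    | succ k ih =>
      have : w (k+1) = f (w k) := Function.iterate_succ_apply' f k c
      rw [this]
      exact kinf_nonneg h1 (kinf_nonneg h2 ih)
  have hstep : ∀ k, w (k + 1) = f (w k) := fun k => Function.iterate_succ_apply' f k c
  have hanti : Antitone w := by
    apply antitone_nat_of_succ_le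
    intro k
    rw [hstep k]
    exact sg_le h1 h2 hsg _ (hwnn k)
  have hbdd : BddBelow (Set.range w) := ⟨0, by rintro y ⟨k, rfl⟩; exact hwnn k⟩
  have hlim : Tendsto w atTop (nhds (⨅ k, w k)) := tendsto_atTop_ciInf hanti hbdd
  set L := ⨅ k, w k with hL
  have hL0 : 0 ≤ L := le_ciInf hwnn
  rcases eq_or_lt_of_le hL0 with hL' | hL'
  · -- L = 0, so eventually w k < ε
    rw [← hL'] at hlim
    have := (hlim.eventually (eventually_lt_nhds hε)).exists
    obtain ⟨k, hk⟩ := this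
    exact ⟨k, hk.le⟩
  · -- L > 0 : contradiction
    exfalso
    have hmem : ∀ᶠ k in atTop, w k ∈ Set.Ici (0:ℝ) := Eventually.of_forall hwnn
    have hlim' : Tendsto w atTop (nhdsWithin L (Set.Ici 0)) :=
      tendsto_nhdsWithin_iff.2 ⟨hlim, hmem⟩
    have hcf : ContinuousWithinAt f (Set.Ici 0) L := by
      apply ContinuousWithinAt.comp (s := Set.Ici 0)
      · exact h1.1 _ (kinf_nonneg h2 hL0)
      · exact h2.1 _ hL0
      · intro y hy; exact kinf_nonneg h2 hy
    have h2lim : Tendsto (fun k => f (w k)) atTop (nhds (f L)) := hcf.tendsto.comp hlim'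
    have h3lim : Tendsto (fun k => w (k + 1)) atTop (nhds L) :=
      hlim.comp (tendsto_add_atTop_nat 1)
    have : f L = L := by
      apply tendsto_nhds_unique _ h3lim
      simpa only [hstep] using h2lim
    have h4 := hsg L hL'
    have : f L < L := h4
    linarith [‹f L = L›]

section StepA

variable {E1 E2 E3 : Type*} [NormedAddCommGroup E1] [NormedAddCommGroup E2]
  [NormedAddCommGroup E3]

lemma stepA
    (βa βb : ℝ → ℝ → ℝ) (hβa : IsClassKL βa) (hβb : IsClassKL βb)
    (γab γar γba γbr : ℝ → ℝ)
    (hγab : IsClassKInf γab) (hγar : IsClassKInf γar)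
    (hγba : IsClassKInf γba) (hγbr : IsClassKInf γbr)
    (hsg : ∀ s > 0, γab (γba s) < s)
    (t0 : ℝ) (a : ℝ → E1) (b : ℝ → E2) (r : ℝ → E3)
    (ha : ContinuousOn a (Set.Ici t0)) (hb : ContinuousOn b (Set.Ici t0))
    (hr : BddAbove ((fun τ => ‖r τ‖) '' Set.Ici t0))
    (Ha : ∀ t0' t', t0 ≤ t0' → t0' ≤ t' →
      ‖a t'‖ ≤ max (βa ‖a t0'‖ (t' - t0'))
        (max (γab (supNorm b t0' t')) (γar (supNorm r t0' t'))))
    (Hb : ∀ t0' t', t0 ≤ t0' → t0' ≤ t' →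
      ‖b t'‖ ≤ max (βb ‖b t0'‖ (t' - t0'))
        (max (γba (supNorm a t0' t')) (γbr (supNorm r t0' t'))))
    {T : ℝ} (hT : t0 ≤ T) :
    supNorm a t0 T ≤ max (max (βa ‖a t0‖ 0) (γab (βb ‖b t0‖ 0)))
      (max (γar (supNorm r t0 T)) (γab (γbr (supNorm r t0 T)))) := by
  set Z := supNorm a t0 T with hZdef
  set X := supNorm b t0 T with hXdef
  set R := supNorm r t0 T with hRdef
  have hbZ := bdd_of_continuousOn ha le_rfl (b := T)
  have hbX := bdd_of_continuousOn hb le_rfl (b := T)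
  have hbR := bdd_of_bdd hr le_rfl (b := T)
  have hZ0 : 0 ≤ Z := supNorm_nonneg_s11 hbZ hT
  have hX0 : 0 ≤ X := supNorm_nonneg_s11 hbX hT
  have hR0 : 0 ≤ R := supNorm_nonneg_s11 hbR hT
  -- pointwise sup bounds
  have hZle : Z ≤ max (βa ‖a t0‖ 0) (max (γab X) (γar R)) := by
    apply supNorm_le_s11 hT
    intro t ht
    refine le_trans (Ha t0 t le_rfl ht.1) (max_le_max ?_ (max_le_max ?_ ?_))
    · exact kl_anti hβa (norm_nonneg _) le_rfl (by linarith [ht.1])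
    · exact kinf_mono hγab (supNorm_nonneg_s11 (bdd_of_continuousOn hb le_rfl) ht.1)
        (supNorm_mono hbX (Set.Icc_subset_Icc le_rfl ht.2) ht.1)
    · exact kinf_mono hγar (supNorm_nonneg_s11 (bdd_of_bdd hr le_rfl) ht.1)
        (supNorm_mono hbR (Set.Icc_subset_Icc le_rfl ht.2) ht.1)
  have hXle : X ≤ max (βb ‖b t0‖ 0) (max (γba Z) (γbr R)) := by
    apply supNorm_le_s11 hT
    intro t ht
    refine le_trans (Hb t0 t le_rfl ht.1) (max_le_max ?_ (max_le_max ?_ ?_))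
    · exact kl_anti hβb (norm_nonneg _) le_rfl (by linarith [ht.1])
    · exact kinf_mono hγba (supNorm_nonneg_s11 (bdd_of_continuousOn ha le_rfl) ht.1)
        (supNorm_mono hbZ (Set.Icc_subset_Icc le_rfl ht.2) ht.1)
    · exact kinf_mono hγbr (supNorm_nonneg_s11 (bdd_of_bdd hr le_rfl) ht.1)
        (supNorm_mono hbR (Set.Icc_subset_Icc le_rfl ht.2) ht.1)
  set A := max (max (βa ‖a t0‖ 0) (γab (βb ‖b t0‖ 0))) (max (γar R) (γab (γbr R))) with hA
  have hA0 : 0 ≤ A :=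
    le_trans (kl_nonneg hβa (norm_nonneg _) le_rfl) (le_trans (le_max_left _ _) (le_max_left _ _))
  have hgabX : γab X ≤ max (γab (βb ‖b t0‖ 0)) (max (γab (γba Z)) (γab (γbr R))) := by
    refine le_trans (kinf_mono hγab hX0 hXle) ?_
    refine le_trans (kinf_max_le hγab (kl_nonneg hβb (norm_nonneg _) le_rfl)
      (le_trans (kinf_nonneg hγba hZ0) (le_max_left _ _))) ?_
    refine max_le_max le_rfl ?_
    exact kinf_max_le hγab (kinf_nonneg hγba hZ0) (kinf_nonneg hγbr hR0)
  have hfin : Z ≤ max A (γab (γba Z)) := by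
    refine le_trans hZle (max_le ?_ (max_le ?_ ?_))
    · exact le_trans (le_trans (le_max_left _ _) (le_max_left _ _)) (le_max_left _ _)
    · refine le_trans hgabX (max_le ?_ (max_le ?_ ?_))
      · exact le_trans (le_trans (le_max_right _ _) (le_max_left _ _)) (le_max_left _ _)
      · exact le_max_right _ _
      · exact le_trans (le_trans (le_max_right _ _) (le_max_right _ _)) (le_max_left _ _)
    · exact le_trans (le_trans (le_max_left _ _) (le_max_right _ _)) (le_max_left _ _)
  exact absorb hZ0 hA0 (fun s hs => hsg s hs) hfin

end StepA

section StepOne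

variable {E1 E2 E3 : Type*} [NormedAddCommGroup E1] [NormedAddCommGroup E2]
  [NormedAddCommGroup E3]

lemma stepOne
    (βa : ℝ → ℝ → ℝ) (hβa : IsClassKL βa)
    (γab γar γba γbr : ℝ → ℝ)
    (hγab : IsClassKInf γab) (hγar : IsClassKInf γar)
    (hγba : IsClassKInf γba) (hγbr : IsClassKInf γbr)
    (hsg : ∀ s > 0, γab (γba s) < s)
    (t0 : ℝ) (a : ℝ → E1) (b : ℝ → E2) (r : ℝ → E3)
    (hb : ContinuousOn b (Set.Ici t0))
    (hr : BddAbove ((fun τ => ‖r τ‖) '' Set.Ici t0))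
    (Ha : ∀ t0' t', t0 ≤ t0' → t0' ≤ t' →
      ‖a t'‖ ≤ max (βa ‖a t0'‖ (t' - t0'))
        (max (γab (supNorm b t0' t')) (γar (supNorm r t0' t'))))
    (ck dk c0 M Δ Tk ε' : ℝ)
    (hε' : 0 ≤ ε') (hck : 0 ≤ ck) (hdk : 0 ≤ dk)
    (hTk : 0 ≤ Tk) (hΔ : 0 ≤ Δ)
    (hc00 : 0 ≤ c0) (hM0 : 0 ≤ M) (hcM : max ck c0 ≤ M) (hβM : βa M Δ ≤ ε')
    (hboundA : ∀ τ, t0 ≤ τ → ‖a τ‖ ≤ max c0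
      (max (γar (supNorm r t0 τ)) (γab (γbr (supNorm r t0 τ)))))
    (hclaimA : ∀ τ, t0 + Tk ≤ τ → ‖a τ‖ ≤ max ck
      (max (γar (supNorm r t0 τ)) (γab (γbr (supNorm r t0 τ)))))
    (hclaimB : ∀ τ, t0 + Tk ≤ τ → ‖b τ‖ ≤ max dk
      (max (γbr (supNorm r t0 τ)) (γba (γar (supNorm r t0 τ))))) :
    ∀ t', t0 + (Tk + Δ) ≤ t' →
      ‖a t'‖ ≤ max (max ε' (γab dk))
        (max (γar (supNorm r t0 t')) (γab (γbr (supNorm r t0 t')))) := by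
  intro t' ht'
  have ht0t' : t0 ≤ t' := by linarith
  have hbR := bdd_of_bdd hr le_rfl (b := t')
  have hR0 : 0 ≤ supNorm r t0 t' := supNorm_nonneg_s11 hbR ht0t'
  set Rt := supNorm r t0 t' with hRt
  set F := max (γar Rt) (γab (γbr Rt)) with hF
  have hF0 : 0 ≤ F := le_trans (kinf_nonneg hγar hR0) (le_max_left _ _)
  by_cases hcase : c0 ≤ F
  · refine le_trans (hboundA t' ht0t') ?_
    rw [← hRt, ← hF, max_eq_right hcase]
    exact le_max_right _ _
  · push_neg at hcase
    set mid := t' - Δ with hmid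
    have hmid0 : t0 ≤ mid := by simp only [hmid]; linarith
    have hmidTk : t0 + Tk ≤ mid := by simp only [hmid]; linarith
    have hmidt' : mid ≤ t' := by simp only [hmid]; linarith
    -- monotonicity of r sup
    have hRmono : ∀ τ, t0 ≤ τ → τ ≤ t' → supNorm r t0 τ ≤ Rt := by
      intro τ h1 h2
      exact supNorm_mono hbR (Set.Icc_subset_Icc le_rfl h2) h1
    have hRτ0 : ∀ τ, t0 ≤ τ → 0 ≤ supNorm r t0 τ := by
      intro τ h1
      exact supNorm_nonneg_s11 (bdd_of_bdd hr le_rfl) h1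
    have hGmono : ∀ τ, t0 ≤ τ → τ ≤ t' →
        max (γar (supNorm r t0 τ)) (γab (γbr (supNorm r t0 τ))) ≤ F := by
      intro τ h1 h2
      exact max_le_max (kinf_mono hγar (hRτ0 τ h1) (hRmono τ h1 h2))
        (kinf_mono hγab (kinf_nonneg hγbr (hRτ0 τ h1))
          (kinf_mono hγbr (hRτ0 τ h1) (hRmono τ h1 h2)))
    -- Term 1 : βa-term
    have hamid : ‖a mid‖ ≤ M := by
      refine le_trans (hclaimA mid hmidTk) (le_trans (max_le_max le_rfl
        (hGmono mid hmid0 hmidt')) ?_)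
      refine le_trans (max_le_max le_rfl hcase.le) hcM
    have hterm1 : βa ‖a mid‖ (t' - mid) ≤ ε' := by
      have h2 : t' - mid = Δ := by simp only [hmid]; ring
      rw [h2]
      exact le_trans (kl_mono hβa (norm_nonneg _) hamid hΔ) hβM
    -- Term 2 : γab-term
    have hsupb : supNorm b mid t' ≤ max dk (max (γbr Rt) (γba (γar Rt))) := by
      apply supNorm_le_s11 hmidt'
      intro τ hτ
      refine le_trans (hclaimB τ (le_trans hmidTk hτ.1)) (max_le_max le_rfl ?_)
      exact max_le_max (kinf_mono hγbr (hRτ0 τ (le_trans hmid0 hτ.1))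
          (hRmono τ (le_trans hmid0 hτ.1) hτ.2))
        (kinf_mono hγba (kinf_nonneg hγar (hRτ0 τ (le_trans hmid0 hτ.1)))
          (kinf_mono hγar (hRτ0 τ (le_trans hmid0 hτ.1)) (hRmono τ (le_trans hmid0 hτ.1) hτ.2)))
    have hsupb0 : 0 ≤ supNorm b mid t' :=
      supNorm_nonneg_s11 (bdd_of_continuousOn hb hmid0) hmidt'
    have hGb0 : 0 ≤ max (γbr Rt) (γba (γar Rt)) :=
      le_trans (kinf_nonneg hγbr hR0) (le_max_left _ _)
    have hterm2 : γab (supNorm b mid t') ≤ max (γab dk) F := by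
      refine le_trans (kinf_mono hγab hsupb0 hsupb) ?_
      refine le_trans (kinf_max_le hγab hdk hGb0) (max_le_max le_rfl ?_)
      refine le_trans (kinf_max_le hγab (kinf_nonneg hγbr hR0)
        (kinf_nonneg hγba (kinf_nonneg hγar hR0))) ?_
      apply max_le (le_max_right _ _)
      exact le_trans (sg_le hγab hγba hsg _ (kinf_nonneg hγar hR0)) (le_max_left _ _)
    -- Term 3
    have hterm3 : γar (supNorm r mid t') ≤ F := by
      refine le_trans (kinf_mono hγar (supNorm_nonneg_s11 (bdd_of_bdd hr hmid0) hmidt') ?_)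
        (le_max_left _ _)
      exact supNorm_mono hbR (Set.Icc_subset_Icc hmid0 le_rfl) hmidt'
    refine le_trans (Ha mid t' hmid0 hmidt') ?_
    apply max_le
    · exact le_trans hterm1 (le_trans (le_max_left _ _) (le_max_left _ _))
    apply max_le
    · refine le_trans hterm2 (max_le ?_ (le_max_right _ _))
      exact le_trans (le_max_right _ _) (le_max_left _ _)
    · exact le_trans hterm3 (le_max_right _ _)

end StepOne

section BaseBound

variable {E1 E2 E3 : Type*} [NormedAddCommGroup E1] [NormedAddCommGroup E2]
  [NormedAddCommGroup E3]

lemma baseBound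
    (βa βb : ℝ → ℝ → ℝ) (hβa : IsClassKL βa) (hβb : IsClassKL βb)
    (γab γar γba γbr : ℝ → ℝ)
    (hγab : IsClassKInf γab) (hγar : IsClassKInf γar)
    (hγba : IsClassKInf γba) (hγbr : IsClassKInf γbr)
    (hsg : ∀ s > 0, γab (γba s) < s)
    (t0 : ℝ) (a : ℝ → E1) (b : ℝ → E2) (r : ℝ → E3)
    (ha : ContinuousOn a (Set.Ici t0)) (hb : ContinuousOn b (Set.Ici t0))
    (hr : BddAbove ((fun τ => ‖r τ‖) '' Set.Ici t0))
    (Ha : ∀ t0' t', t0 ≤ t0' → t0' ≤ t' →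
      ‖a t'‖ ≤ max (βa ‖a t0'‖ (t' - t0'))
        (max (γab (supNorm b t0' t')) (γar (supNorm r t0' t'))))
    (Hb : ∀ t0' t', t0 ≤ t0' → t0' ≤ t' →
      ‖b t'‖ ≤ max (βb ‖b t0'‖ (t' - t0'))
        (max (γba (supNorm a t0' t')) (γbr (supNorm r t0' t'))))
    {P : ℝ} (hP : 0 ≤ P) (han : ‖a t0‖ ≤ P) (hbn : ‖b t0‖ ≤ P) :
    ∀ τ, t0 ≤ τ → ‖a τ‖ ≤ max (max (βa P 0) (γab (βb P 0)))
      (max (γar (supNorm r t0 τ)) (γab (γbr (supNorm r t0 τ)))) := by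
  intro τ hτ
  have h1 : ‖a τ‖ ≤ supNorm a t0 τ :=
    le_supNorm_s11 (bdd_of_continuousOn ha le_rfl) ⟨hτ, le_rfl⟩
  refine le_trans h1 (le_trans (stepA βa βb hβa hβb γab γar γba γbr hγab hγar hγba hγbr
    hsg t0 a b r ha hb hr Ha Hb hτ) ?_)
  refine max_le_max (max_le_max ?_ ?_) le_rfl
  · exact kl_mono hβa (norm_nonneg _) han le_rfl
  · exact kinf_mono hγab (kl_nonneg hβb (norm_nonneg _) le_rfl)
      (kl_mono hβb (norm_nonneg _) hbn le_rfl)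

end BaseBound

section Decay

variable {E1 E2 E3 : Type*} [NormedAddCommGroup E1] [NormedAddCommGroup E2]
  [NormedAddCommGroup E3]

lemma decay
    (βz βx : ℝ → ℝ → ℝ) (hβz : IsClassKL βz) (hβx : IsClassKL βx)
    (γzx γzr γxz γxr : ℝ → ℝ)
    (hγzx : IsClassKInf γzx) (hγzr : IsClassKInf γzr)
    (hγxz : IsClassKInf γxz) (hγxr : IsClassKInf γxr)
    (hsg : ∀ s > 0, γzx (γxz s) < s)
    (p : ℕ) (ε : ℝ) (hε : 0 < ε) :
    ∃ T : ℝ, 0 ≤ T ∧ ∀ (t0 : ℝ) (z : ℝ → E1) (x : ℝ → E2) (r : ℝ → E3),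
      ContinuousOn z (Set.Ici t0) → ContinuousOn x (Set.Ici t0) →
      BddAbove ((fun τ => ‖r τ‖) '' Set.Ici t0) →
      (∀ t0' t', t0 ≤ t0' → t0' ≤ t' →
        ‖z t'‖ ≤ max (βz ‖z t0'‖ (t' - t0'))
          (max (γzx (supNorm x t0' t')) (γzr (supNorm r t0' t')))) →
      (∀ t0' t', t0 ≤ t0' → t0' ≤ t' →
        ‖x t'‖ ≤ max (βx ‖x t0'‖ (t' - t0'))
          (max (γxz (supNorm z t0' t')) (γxr (supNorm r t0' t')))) →
      Real.sqrt (‖z t0‖ ^ 2 + ‖x t0‖ ^ 2) ≤ (p : ℝ) →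
      ∀ t', t0 + T ≤ t' →
        ‖z t'‖ ≤ max ε (max (γzr (supNorm r t0 t')) (γzx (γxr (supNorm r t0 t')))) ∧
        ‖x t'‖ ≤ max ε (max (γxr (supNorm r t0 t')) (γxz (γzr (supNorm r t0 t')))) := by
  have hsg' : ∀ s > 0, γxz (γzx s) < s := sg_swap hγzx hγxz hsg
  -- choose ε'
  obtain ⟨ε', hε'pos, hε'le, hzxε', hxzε'⟩ :
      ∃ ε', 0 < ε' ∧ ε' ≤ ε ∧ γzx ε' ≤ ε ∧ γxz ε' ≤ ε := by
    have h0 : (0:ℝ) ∈ Set.Ici (0:ℝ) := Set.self_mem_Ici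
    have c1 : Filter.Tendsto γzx (nhdsWithin 0 (Set.Ioi 0)) (nhds 0) := by
      have h := (hγzx.1 0 h0).tendsto
      rw [hγzx.2.2.1] at h
      exact h.mono_left (nhdsWithin_mono _ (fun y hy => Set.mem_Ici.2 (le_of_lt hy)))
    have c2 : Filter.Tendsto γxz (nhdsWithin 0 (Set.Ioi 0)) (nhds 0) := by
      have h := (hγxz.1 0 h0).tendsto
      rw [hγxz.2.2.1] at h
      exact h.mono_left (nhdsWithin_mono _ (fun y hy => Set.mem_Ici.2 (le_of_lt hy)))
    have e1 : ∀ᶠ y in nhdsWithin 0 (Set.Ioi 0), γzx y < ε := c1.eventually (eventually_lt_nhds hε)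
    have e2 : ∀ᶠ y in nhdsWithin 0 (Set.Ioi 0), γxz y < ε := c2.eventually (eventually_lt_nhds hε)
    have e3 : ∀ᶠ y in nhdsWithin (0:ℝ) (Set.Ioi (0:ℝ)), y < ε := by
      have h : Filter.Tendsto (id : ℝ → ℝ) (nhdsWithin 0 (Set.Ioi 0)) (nhds 0) :=
        tendsto_id.mono_left nhdsWithin_le_nhds
      exact h.eventually (eventually_lt_nhds hε)
    have e4 : ∀ᶠ y in nhdsWithin (0:ℝ) (Set.Ioi (0:ℝ)), 0 < y := eventually_mem_nhdsWithin
    obtain ⟨y, hy1, hy2, hy3, hy4⟩ := (e1.and (e2.and (e3.and e4))).exists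
    exact ⟨y, hy4, hy3.le, hy1.le, hy2.le⟩
  -- the constant sequences
  set cd : ℕ → ℝ × ℝ := fun k => Nat.rec
    (⟨max (βz p 0) (γzx (βx p 0)), max (βx p 0) (γxz (βz p 0))⟩)
    (fun _ pr => (max ε' (γzx pr.2), max ε' (γxz pr.1))) k with hcd
  have hcds : ∀ k, cd (k+1) = (max ε' (γzx (cd k).2), max ε' (γxz (cd k).1)) := fun k => rfl
  have hp0 : (0:ℝ) ≤ (p:ℝ) := Nat.cast_nonneg p
  have hc00 : 0 ≤ (cd 0).1 := le_trans (kl_nonneg hβz hp0 le_rfl) (le_max_left _ _)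
  have hd00 : 0 ≤ (cd 0).2 := le_trans (kl_nonneg hβx hp0 le_rfl) (le_max_left _ _)
  have hcnn : ∀ k, 0 ≤ (cd k).1 := by
    intro k
    cases k with
    | zero => exact hc00
    | succ k => rw [hcds k]; exact le_trans hε'pos.le (le_max_left _ _)
  have hdnn : ∀ k, 0 ≤ (cd k).2 := by
    intro k
    cases k with
    | zero => exact hd00
    | succ k => rw [hcds k]; exact le_trans hε'pos.le (le_max_left _ _)
  -- the inductive claim
  have claim : ∀ k : ℕ, ∃ T : ℝ, 0 ≤ T ∧ ∀ (t0 : ℝ) (z : ℝ → E1) (x : ℝ → E2) (r : ℝ → E3),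
      ContinuousOn z (Set.Ici t0) → ContinuousOn x (Set.Ici t0) →
      BddAbove ((fun τ => ‖r τ‖) '' Set.Ici t0) →
      (∀ t0' t', t0 ≤ t0' → t0' ≤ t' →
        ‖z t'‖ ≤ max (βz ‖z t0'‖ (t' - t0'))
          (max (γzx (supNorm x t0' t')) (γzr (supNorm r t0' t')))) →
      (∀ t0' t', t0 ≤ t0' → t0' ≤ t' →
        ‖x t'‖ ≤ max (βx ‖x t0'‖ (t' - t0'))
          (max (γxz (supNorm z t0' t')) (γxr (supNorm r t0' t')))) →
      Real.sqrt (‖z t0‖ ^ 2 + ‖x t0‖ ^ 2) ≤ (p : ℝ) →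
      ∀ t', t0 + T ≤ t' →
        ‖z t'‖ ≤ max (cd k).1 (max (γzr (supNorm r t0 t')) (γzx (γxr (supNorm r t0 t')))) ∧
        ‖x t'‖ ≤ max (cd k).2 (max (γxr (supNorm r t0 t')) (γxz (γzr (supNorm r t0 t')))) := by
    intro k
    induction k with
    | zero =>
      refine ⟨0, le_rfl, ?_⟩
      intro t0 z x r hz hx hr Hz Hx hs0 t' ht'
      rw [add_zero] at ht'
      have hzn : ‖z t0‖ ≤ (p:ℝ) := le_trans (Real.le_sqrt_of_sq_le
        (le_add_of_nonneg_right (sq_nonneg _))) hs0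
      have hxn : ‖x t0‖ ≤ (p:ℝ) := le_trans (Real.le_sqrt_of_sq_le
        (le_add_of_nonneg_left (sq_nonneg _))) hs0
      constructor
      · exact baseBound βz βx hβz hβx γzx γzr γxz γxr hγzx hγzr hγxz hγxr hsg
          t0 z x r hz hx hr Hz Hx hp0 hzn hxn t' ht'
      · exact baseBound βx βz hβx hβz γxz γxr γzx γzr hγxz hγxr hγzx hγzr hsg'
          t0 x z r hx hz hr Hx Hz hp0 hxn hzn t' ht'
    | succ k ih =>
      obtain ⟨Tk, hTk0, hcl⟩ := ih
      -- choose Δ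
      set Mz : ℝ := max (cd k).1 (cd 0).1 with hMz
      set Mx : ℝ := max (cd k).2 (cd 0).2 with hMx
      have hMz0 : 0 ≤ Mz := le_trans (hcnn k) (le_max_left _ _)
      have hMx0 : 0 ≤ Mx := le_trans (hdnn k) (le_max_left _ _)
      obtain ⟨Δ1, hΔ1⟩ : ∃ Δ1, ∀ t ≥ Δ1, βz Mz t < ε' :=
        ((hβz.2 Mz hMz0).2.eventually (eventually_lt_nhds hε'pos)).exists_forall_of_atTop
      obtain ⟨Δ2, hΔ2⟩ : ∃ Δ2, ∀ t ≥ Δ2, βx Mx t < ε' :=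
        ((hβx.2 Mx hMx0).2.eventually (eventually_lt_nhds hε'pos)).exists_forall_of_atTop
      set Δ : ℝ := max 0 (max Δ1 Δ2) with hΔdef
      have hΔ0 : 0 ≤ Δ := le_max_left _ _
      have hβzΔ : βz Mz Δ ≤ ε' :=
        (hΔ1 Δ (le_trans (le_max_left _ _) (le_max_right _ _))).le
      have hβxΔ : βx Mx Δ ≤ ε' :=
        (hΔ2 Δ (le_trans (le_max_right _ _) (le_max_right _ _))).le
      refine ⟨Tk + Δ, by linarith, ?_⟩
      intro t0 z x r hz hx hr Hz Hx hs0 t' ht'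
      have hzn : ‖z t0‖ ≤ (p:ℝ) := le_trans (Real.le_sqrt_of_sq_le
        (le_add_of_nonneg_right (sq_nonneg _))) hs0
      have hxn : ‖x t0‖ ≤ (p:ℝ) := le_trans (Real.le_sqrt_of_sq_le
        (le_add_of_nonneg_left (sq_nonneg _))) hs0
      have hboundZ := baseBound βz βx hβz hβx γzx γzr γxz γxr hγzx hγzr hγxz hγxr hsg
          t0 z x r hz hx hr Hz Hx hp0 hzn hxn
      have hboundX := baseBound βx βz hβx hβz γxz γxr γzx γzr hγxz hγxr hγzx hγzr hsg'
          t0 x z r hx hz hr Hx Hz hp0 hxn hzn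
      have hclZ := fun τ hτ => (hcl t0 z x r hz hx hr Hz Hx hs0 τ hτ).1
      have hclX := fun τ hτ => (hcl t0 z x r hz hx hr Hz Hx hs0 τ hτ).2
      constructor
      · have := stepOne βz hβz γzx γzr γxz γxr hγzx hγzr hγxz hγxr hsg
          t0 z x r hx hr Hz (cd k).1 (cd k).2 (cd 0).1 Mz Δ Tk ε'
          hε'pos.le (hcnn k) (hdnn k) hTk0 hΔ0 hc00 hMz0 le_rfl hβzΔ
          hboundZ hclZ hclX t' ht'
        rw [hcds k]
        exact this
      · have := stepOne βx hβx γxz γxr γzx γzr hγxz hγxr hγzx hγzr hsg'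
          t0 x z r hz hr Hx (cd k).2 (cd k).1 (cd 0).2 Mx Δ Tk ε'
          hε'pos.le (hdnn k) (hcnn k) hTk0 hΔ0 hd00 hMx0 le_rfl hβxΔ
          hboundX hclX hclZ t' ht'
        rw [hcds k]
        exact this
  -- convergence of the constants
  have hqmax : ∀ a b : ℝ, 0 ≤ a → 0 ≤ b → γzx (γxz (max a b)) ≤ max (γzx (γxz a)) (γzx (γxz b)) := by
    intro a b ha hb
    refine le_trans (kinf_mono hγzx (kinf_nonneg hγxz (le_max_of_le_left ha))
      (kinf_max_le hγxz ha hb)) (kinf_max_le hγzx (kinf_nonneg hγxz ha) (kinf_nonneg hγxz hb))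
  have hqmax' : ∀ a b : ℝ, 0 ≤ a → 0 ≤ b → γxz (γzx (max a b)) ≤ max (γxz (γzx a)) (γxz (γzx b)) := by
    intro a b ha hb
    refine le_trans (kinf_mono hγxz (kinf_nonneg hγzx (le_max_of_le_left ha))
      (kinf_max_le hγzx ha hb)) (kinf_max_le hγxz (kinf_nonneg hγzx ha) (kinf_nonneg hγzx hb))
  have heven : ∀ k, (cd (k+2)).1 ≤ max ε (γzx (γxz (cd k).1)) := by
    intro k
    rw [hcds (k+1), hcds k]
    simp only
    refine max_le (le_max_of_le_left hε'le) ?_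
    refine le_trans (kinf_max_le hγzx hε'pos.le (kinf_nonneg hγxz (hcnn k))) ?_
    exact max_le (le_max_of_le_left hzxε') (le_max_right _ _)
  have heven' : ∀ k, (cd (k+2)).2 ≤ max ε (γxz (γzx (cd k).2)) := by
    intro k
    rw [hcds (k+1), hcds k]
    simp only
    refine max_le (le_max_of_le_left hε'le) ?_
    refine le_trans (kinf_max_le hγxz hε'pos.le (kinf_nonneg hγzx (hdnn k))) ?_
    exact max_le (le_max_of_le_left hxzε') (le_max_right _ _)
  -- iterates nonneg
  set q1 : ℝ → ℝ := fun s => γzx (γxz s) with hq1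
  set q2 : ℝ → ℝ := fun s => γxz (γzx s) with hq2
  have hq1nn : ∀ j c, 0 ≤ c → 0 ≤ q1^[j] c := by
    intro j
    induction j with
    | zero => intro c hc; exact hc
    | succ j ihj =>
      intro c hc
      rw [Function.iterate_succ_apply]
      exact ihj _ (kinf_nonneg hγzx (kinf_nonneg hγxz hc))
  have hq2nn : ∀ j c, 0 ≤ c → 0 ≤ q2^[j] c := by
    intro j
    induction j with
    | zero => intro c hc; exact hc
    | succ j ihj =>
      intro c hc
      rw [Function.iterate_succ_apply]
      exact ihj _ (kinf_nonneg hγxz (kinf_nonneg hγzx hc))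
  have hiterc : ∀ j, (cd (2*j)).1 ≤ max ε (q1^[j] (cd 0).1) := by
    intro j
    induction j with
    | zero => exact le_max_of_le_right le_rfl
    | succ j ihj =>
      have h1 : (cd (2*(j+1))).1 ≤ max ε (q1 ((cd (2*j)).1)) := by
        have : 2*(j+1) = 2*j + 2 := by ring
        rw [this]
        exact heven (2*j)
      refine le_trans h1 (max_le (le_max_left _ _) ?_)
      have h2 : q1 ((cd (2*j)).1) ≤ q1 (max ε (q1^[j] (cd 0).1)) :=
        kinf_mono hγzx (kinf_nonneg hγxz (hcnn _))
          (kinf_mono hγxz (hcnn _) ihj)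
      refine le_trans h2 (le_trans (hqmax ε _ hε.le (hq1nn j _ hc00)) ?_)
      refine max_le (le_max_of_le_left (sg_le hγzx hγxz hsg ε hε.le)) ?_
      have he : q1^[j+1] (cd 0).1 = q1 (q1^[j] (cd 0).1) :=
        Function.iterate_succ_apply' q1 j _
      rw [he]
      exact le_max_right _ _
  have hiterd : ∀ j, (cd (2*j)).2 ≤ max ε (q2^[j] (cd 0).2) := by
    intro j
    induction j with
    | zero => exact le_max_of_le_right le_rfl
    | succ j ihj =>
      have h1 : (cd (2*(j+1))).2 ≤ max ε (q2 ((cd (2*j)).2)) := by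
        have : 2*(j+1) = 2*j + 2 := by ring
        rw [this]
        exact heven' (2*j)
      refine le_trans h1 (max_le (le_max_left _ _) ?_)
      have h2 : q2 ((cd (2*j)).2) ≤ q2 (max ε (q2^[j] (cd 0).2)) :=
        kinf_mono hγxz (kinf_nonneg hγzx (hdnn _))
          (kinf_mono hγzx (hdnn _) ihj)
      refine le_trans h2 (le_trans (hqmax' ε _ hε.le (hq2nn j _ hd00)) ?_)
      refine max_le (le_max_of_le_left (sg_le hγxz hγzx hsg' ε hε.le)) ?_
      have he : q2^[j+1] (cd 0).2 = q2 (q2^[j] (cd 0).2) :=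
        Function.iterate_succ_apply' q2 j _
      rw [he]
      exact le_max_right _ _
  obtain ⟨k1, hk1⟩ := sg_iterate hγzx hγxz hsg (cd 0).1 hc00 hε
  obtain ⟨k2, hk2⟩ := sg_iterate hγxz hγzx hsg' (cd 0).2 hd00 hε
  -- iterates are monotone decreasing, so evaluate at j := max k1 k2
  set j0 : ℕ := max k1 k2 with hj0
  have hmono1 : Antitone (fun n => q1^[n] (cd 0).1) := by
    apply antitone_nat_of_succ_le
    intro n
    have he : q1^[n+1] (cd 0).1 = q1 (q1^[n] (cd 0).1) :=
      Function.iterate_succ_apply' q1 n _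
    rw [he]
    exact sg_le hγzx hγxz hsg _ (hq1nn _ _ hc00)
  have hmono2 : Antitone (fun n => q2^[n] (cd 0).2) := by
    apply antitone_nat_of_succ_le
    intro n
    have he : q2^[n+1] (cd 0).2 = q2 (q2^[n] (cd 0).2) :=
      Function.iterate_succ_apply' q2 n _
    rw [he]
    exact sg_le hγxz hγzx hsg' _ (hq2nn _ _ hd00)
  have hcfin : (cd (2*j0)).1 ≤ ε :=
    le_trans (hiterc j0) (max_le le_rfl (le_trans (hmono1 (le_max_left k1 k2)) hk1))
  have hdfin : (cd (2*j0)).2 ≤ ε :=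
    le_trans (hiterd j0) (max_le le_rfl (le_trans (hmono2 (le_max_right k1 k2)) hk2))
  obtain ⟨T, hT0, hT⟩ := claim (2*j0)
  refine ⟨T, hT0, ?_⟩
  intro t0 z x r hz hx hr Hz Hx hs0 t' ht'
  obtain ⟨h1, h2⟩ := hT t0 z x r hz hx hr Hz Hx hs0 t' ht'
  exact ⟨le_trans h1 (max_le_max hcfin le_rfl), le_trans h2 (max_le_max hdfin le_rfl)⟩

end Decay

section Interp

noncomputable def interp (g : ℤ → ℝ) (s : ℝ) : ℝ :=
  max (g (⌊s⌋ + 1)) (Int.fract s * g (⌊s⌋ + 2))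

variable {g : ℤ → ℝ}

lemma interp_ge (s : ℝ) : g (⌊s⌋ + 1) ≤ interp g s := le_max_left _ _

lemma interp_le (hg0 : ∀ i, 0 ≤ g i) (hmono : Monotone g) (s : ℝ) :
    interp g s ≤ g (⌊s⌋ + 2) := by
  apply max_le (hmono (by linarith))
  exact mul_le_of_le_one_left (hg0 _) (Int.fract_lt_one s).le

lemma interp_pos (hgp : ∀ i, 0 < g i) (s : ℝ) : 0 < interp g s :=
  lt_of_lt_of_le (hgp _) (interp_ge s)

lemma interp_mono (hg0 : ∀ i, 0 ≤ g i) (hmono : Monotone g) : Monotone (interp g) := by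
  intro s s' hss'
  have hfl : ⌊s⌋ ≤ ⌊s'⌋ := Int.floor_le_floor hss'
  rcases eq_or_lt_of_le hfl with he | hlt
  · unfold interp
    rw [← he]
    refine max_le_max le_rfl (mul_le_mul ?_ le_rfl (hg0 _) (Int.fract_nonneg _))
    have h1 : Int.fract s = s - ⌊s⌋ := (Int.self_sub_floor s).symm
    have h2 : Int.fract s' = s' - ⌊s'⌋ := (Int.self_sub_floor s').symm
    rw [h1, h2, ← he]
    linarith
  · refine le_trans (interp_le hg0 hmono s) (le_trans ?_ (interp_ge s'))
    exact hmono (by omega)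

lemma interp_continuous (hg0 : ∀ i, 0 ≤ g i) (hmono : Monotone g) :
    Continuous (interp g) := by
  rw [continuous_iff_continuousAt]
  intro s0
  by_cases hint : ∃ P : ℤ, s0 = (P : ℝ)
  · obtain ⟨P, rfl⟩ := hint
    have hFP : interp g (P : ℝ) = g (P + 1) := by
      unfold interp
      rw [Int.floor_intCast, Int.fract_intCast, zero_mul]
      exact max_eq_left (hg0 _)
    rw [continuousAt_iff_continuous_left_right]
    constructor
    · -- left continuity
      have hGL : Continuous (fun s : ℝ => max (g P) ((s - ((P : ℝ) - 1)) * g (P + 1))) := by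
        fun_prop
      apply hGL.continuousWithinAt.congr_of_eventuallyEq
      · have hmem : Set.Ioc ((P : ℝ) - 1) (P : ℝ) ∈ nhdsWithin (P : ℝ) (Set.Iic (P : ℝ)) := by
          rw [show Set.Ioc ((P:ℝ)-1) (P:ℝ) = Set.Ioi ((P:ℝ)-1) ∩ Set.Iic (P:ℝ) from rfl]
          exact Filter.inter_mem (mem_nhdsWithin_of_mem_nhds
            (isOpen_Ioi.mem_nhds (Set.mem_Ioi.2 (by linarith)))) self_mem_nhdsWithin
        filter_upwards [hmem] with s hs
        rcases eq_or_lt_of_le hs.2 with he | hlt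
        · rw [he, hFP]
          have : ((P : ℝ) - ((P : ℝ) - 1)) = 1 := by ring
          rw [this, one_mul]
          exact (max_eq_right (hmono (by omega))).symm
        · have hfl : ⌊s⌋ = P - 1 := by
            rw [Int.floor_eq_iff]
            constructor
            · push_cast; linarith [hs.1]
            · push_cast; linarith
          have hfr : Int.fract s = s - ((P : ℝ) - 1) := by
            rw [← Int.self_sub_floor, hfl]
            push_cast
            ring
          unfold interp
          rw [hfl, hfr]
          have h1 : P - 1 + 1 = P := by ring
          have h2 : P - 1 + 2 = P + 1 := by ring
          rw [h1, h2]
      · rw [hFP]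
        have : ((P : ℝ) - ((P : ℝ) - 1)) = 1 := by ring
        rw [this, one_mul]
        exact (max_eq_right (hmono (by omega))).symm
    · -- right continuity
      have hGR : Continuous (fun s : ℝ => max (g (P + 1)) ((s - (P : ℝ)) * g (P + 2))) := by
        fun_prop
      apply hGR.continuousWithinAt.congr_of_eventuallyEq
      · have hmem : Set.Ico (P : ℝ) ((P : ℝ) + 1) ∈ nhdsWithin (P : ℝ) (Set.Ici (P : ℝ)) := by
          rw [show Set.Ico (P:ℝ) ((P:ℝ)+1) = Set.Iio ((P:ℝ)+1) ∩ Set.Ici (P:ℝ) by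
            rw [Set.inter_comm]; rfl]
          exact Filter.inter_mem (mem_nhdsWithin_of_mem_nhds
            (isOpen_Iio.mem_nhds (Set.mem_Iio.2 (by linarith)))) self_mem_nhdsWithin
        filter_upwards [hmem] with s hs
        have hfl : ⌊s⌋ = P := by
          rw [Int.floor_eq_iff]
          exact ⟨hs.1, hs.2⟩
        have hfr : Int.fract s = s - (P : ℝ) := by
          rw [← Int.self_sub_floor, hfl]
        unfold interp
        rw [hfl, hfr]
      · rw [hFP]
        have : ((P : ℝ) - (P : ℝ)) = 0 := by ring
        rw [this, zero_mul]
        exact (max_eq_left (hg0 _)).symm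
  · -- non-integer point
    set P := ⌊s0⌋ with hP
    have h1 : (P : ℝ) < s0 := lt_of_le_of_ne (Int.floor_le s0) (fun h => hint ⟨P, h.symm⟩)
    have h2 : s0 < (P : ℝ) + 1 := Int.lt_floor_add_one s0
    have hmem : Set.Ioo ((P : ℝ)) ((P : ℝ) + 1) ∈ nhds s0 := isOpen_Ioo.mem_nhds ⟨h1, h2⟩
    have hev : (fun s => max (g (P + 1)) ((s - (P : ℝ)) * g (P + 2))) =ᶠ[nhds s0] interp g := by
      filter_upwards [hmem] with s hs
      have hfl : ⌊s⌋ = P := by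
        rw [Int.floor_eq_iff]
        exact ⟨hs.1.le, hs.2⟩
      have hfr : Int.fract s = s - (P : ℝ) := by rw [← Int.self_sub_floor, hfl]
      unfold interp
      rw [hfl, hfr]
    have hG : Continuous (fun s : ℝ => max (g (P + 1)) ((s - (P : ℝ)) * g (P + 2))) := by
      fun_prop
    exact hG.continuousAt.congr hev

end Interp

section Theta

noncomputable def Jstar (S : ℕ → ℕ → ℝ) (p : ℕ) (τ : ℝ) : ℕ := sSup {J : ℕ | S p J ≤ τ}

noncomputable def theta (S : ℕ → ℕ → ℝ) (p : ℕ) (τ : ℝ) : ℝ := (2⁻¹ : ℝ) ^ (Jstar S p τ)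

noncomputable def Theta (S : ℕ → ℕ → ℝ) (s τ : ℝ) : ℝ :=
  interp (fun i => theta S i.toNat τ) s

variable {S : ℕ → ℕ → ℝ}

lemma Jset_bdd (hS1 : ∀ (p j : ℕ), (j : ℝ) ≤ S p j) (p : ℕ) (τ : ℝ) :
    BddAbove {J : ℕ | S p J ≤ τ} :=
  ⟨Nat.floor (max τ 0), fun J hJ =>
    Nat.le_floor (le_trans (le_trans (hS1 p J) hJ) (le_max_left _ _))⟩

lemma theta_pos (p : ℕ) (τ : ℝ) : 0 < theta S p τ := pow_pos (by norm_num) _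

lemma theta_le_one (p : ℕ) (τ : ℝ) : theta S p τ ≤ 1 :=
  pow_le_one₀ (by norm_num) (by norm_num)

lemma theta_mono_p (hS1 : ∀ (p j : ℕ), (j : ℝ) ≤ S p j)
    (hS2 : ∀ (p p' : ℕ) (j : ℕ), p ≤ p' → S p j ≤ S p' j) {p p' : ℕ} (hpp : p ≤ p') (τ : ℝ) :
    theta S p τ ≤ theta S p' τ := by
  have hsub : {J : ℕ | S p' J ≤ τ} ⊆ {J : ℕ | S p J ≤ τ} :=
    fun J hJ => le_trans (hS2 p p' J hpp) hJ
  by_cases hne : {J : ℕ | S p' J ≤ τ}.Nonempty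
  · exact pow_le_pow_of_le_one (by norm_num) (by norm_num)
      (csSup_le_csSup (Jset_bdd hS1 p τ) hne hsub)
  · have : Jstar S p' τ = 0 := by
      unfold Jstar
      rw [Set.not_nonempty_iff_eq_empty.1 hne, csSup_empty]
      rfl
    unfold theta
    rw [this, pow_zero]
    exact theta_le_one p τ
  
lemma theta_anti (hS1 : ∀ (p j : ℕ), (j : ℝ) ≤ S p j) (p : ℕ) {τ τ' : ℝ} (hττ : τ ≤ τ') :
    theta S p τ' ≤ theta S p τ := by
  have hsub : {J : ℕ | S p J ≤ τ} ⊆ {J : ℕ | S p J ≤ τ'} :=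
    fun J hJ => le_trans hJ hττ
  by_cases hne : {J : ℕ | S p J ≤ τ}.Nonempty
  · exact pow_le_pow_of_le_one (by norm_num) (by norm_num)
      (csSup_le_csSup (Jset_bdd hS1 p τ') hne hsub)
  · have : Jstar S p τ = 0 := by
      unfold Jstar
      rw [Set.not_nonempty_iff_eq_empty.1 hne, csSup_empty]
      rfl
    unfold theta
    rw [this, pow_zero]
    exact theta_le_one p τ'

lemma theta_tendsto (hS1 : ∀ (p j : ℕ), (j : ℝ) ≤ S p j) (p : ℕ) :
    Filter.Tendsto (theta S p) Filter.atTop (nhds 0) := by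
  rw [Metric.tendsto_atTop]
  intro ε hε
  obtain ⟨J, hJ⟩ := exists_pow_lt_of_lt_one hε (by norm_num : (2⁻¹ : ℝ) < 1)
  refine ⟨S p J, fun τ hτ => ?_⟩
  rw [Real.dist_eq, sub_zero, abs_of_pos (theta_pos p τ)]
  refine lt_of_le_of_lt ?_ hJ
  exact pow_le_pow_of_le_one (by norm_num) (by norm_num)
    (le_csSup (Jset_bdd hS1 p τ) hτ)

lemma Jstar_spec (hS1 : ∀ (p j : ℕ), (j : ℝ) ≤ S p j) {p : ℕ} {τ : ℝ}
    (hne : {J : ℕ | S p J ≤ τ}.Nonempty) : S p (Jstar S p τ) ≤ τ :=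
  Nat.sSup_mem hne (Jset_bdd hS1 p τ)

lemma theta_of_empty {p : ℕ} {τ : ℝ} (hne : ¬ {J : ℕ | S p J ≤ τ}.Nonempty) :
    theta S p τ = 1 := by
  have : Jstar S p τ = 0 := by
    unfold Jstar
    rw [Set.not_nonempty_iff_eq_empty.1 hne, csSup_empty]
    rfl
  unfold theta
  rw [this, pow_zero]

-- Theta lemmas
lemma Theta_g_nonneg (τ : ℝ) : ∀ i : ℤ, 0 ≤ theta S i.toNat τ :=
  fun i => (theta_pos _ _).le

lemma Theta_g_mono (hS1 : ∀ (p j : ℕ), (j : ℝ) ≤ S p j)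
    (hS2 : ∀ (p p' : ℕ) (j : ℕ), p ≤ p' → S p j ≤ S p' j) (τ : ℝ) :
    Monotone (fun i : ℤ => theta S i.toNat τ) :=
  fun i i' hii => theta_mono_p hS1 hS2 (Int.toNat_le_toNat hii) τ

lemma Theta_pos (s τ : ℝ) : 0 < Theta S s τ := interp_pos (fun _ => theta_pos _ _) s

lemma Theta_cont (hS1 : ∀ (p j : ℕ), (j : ℝ) ≤ S p j)
    (hS2 : ∀ (p p' : ℕ) (j : ℕ), p ≤ p' → S p j ≤ S p' j) (τ : ℝ) :
    Continuous (fun s => Theta S s τ) :=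
  interp_continuous (Theta_g_nonneg τ) (Theta_g_mono hS1 hS2 τ)

lemma Theta_mono_s (hS1 : ∀ (p j : ℕ), (j : ℝ) ≤ S p j)
    (hS2 : ∀ (p p' : ℕ) (j : ℕ), p ≤ p' → S p j ≤ S p' j) (τ : ℝ) :
    Monotone (fun s => Theta S s τ) :=
  interp_mono (Theta_g_nonneg τ) (Theta_g_mono hS1 hS2 τ)

lemma Theta_anti (hS1 : ∀ (p j : ℕ), (j : ℝ) ≤ S p j) (s : ℝ) {τ τ' : ℝ} (hττ : τ ≤ τ') :
    Theta S s τ' ≤ Theta S s τ := by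
  unfold Theta interp
  refine max_le_max (theta_anti hS1 _ hττ) ?_
  exact mul_le_mul_of_nonneg_left (theta_anti hS1 _ hττ) (Int.fract_nonneg _)

lemma Theta_le (hS1 : ∀ (p j : ℕ), (j : ℝ) ≤ S p j)
    (hS2 : ∀ (p p' : ℕ) (j : ℕ), p ≤ p' → S p j ≤ S p' j) (s τ : ℝ) :
    Theta S s τ ≤ theta S (⌊s⌋ + 2).toNat τ :=
  interp_le (Theta_g_nonneg τ) (Theta_g_mono hS1 hS2 τ) s

lemma Theta_ge (s τ : ℝ) : theta S (⌊s⌋ + 1).toNat τ ≤ Theta S s τ :=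
  interp_ge (g := fun i => theta S i.toNat τ) s

lemma Theta_tendsto (hS1 : ∀ (p j : ℕ), (j : ℝ) ≤ S p j)
    (hS2 : ∀ (p p' : ℕ) (j : ℕ), p ≤ p' → S p j ≤ S p' j) (s : ℝ) :
    Filter.Tendsto (fun τ => Theta S s τ) Filter.atTop (nhds 0) :=
  squeeze_zero (fun τ => (Theta_pos s τ).le) (fun τ => Theta_le hS1 hS2 s τ)
    (theta_tendsto hS1 _)

end Theta

section KLenv

noncomputable def klEnv (S : ℕ → ℕ → ℝ) (m : ℝ → ℝ) : ℝ → ℝ → ℝ :=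
  fun s t => Real.sqrt ((m s + (m s) ^ 2) * Theta S s t)

variable {S : ℕ → ℕ → ℝ} {m : ℝ → ℝ}

lemma klEnv_isKL (hS1 : ∀ (p j : ℕ), (j : ℝ) ≤ S p j)
    (hS2 : ∀ (p p' : ℕ) (j : ℕ), p ≤ p' → S p j ≤ S p' j)
    (hmc : ContinuousOn m (Set.Ici 0)) (hms : StrictMonoOn m (Set.Ici 0))
    (hm0 : m 0 = 0) : IsClassKL (klEnv S m) := by
  have hmnn : ∀ s, s ∈ Set.Ici (0:ℝ) → 0 ≤ m s := by
    intro s hs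
    rw [← hm0]
    exact hms.monotoneOn (Set.self_mem_Ici) hs hs
  constructor
  · intro t _
    refine ⟨?_, ?_, ?_⟩
    · apply Real.continuous_sqrt.comp_continuousOn
      exact (hmc.add (hmc.pow 2)).mul (Theta_cont hS1 hS2 t).continuousOn
    · intro a ha b hb hab
      have hma : 0 ≤ m a := hmnn a ha
      have hmb : m a < m b := hms ha hb hab
      have hth : Theta S a t ≤ Theta S b t := Theta_mono_s hS1 hS2 t hab.le
      have hthp : 0 < Theta S b t := Theta_pos b t
      have htha : 0 ≤ Theta S a t := (Theta_pos a t).le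
      apply Real.sqrt_lt_sqrt (mul_nonneg (by nlinarith) htha)
      calc (m a + m a ^ 2) * Theta S a t
          ≤ (m a + m a ^ 2) * Theta S b t :=
            mul_le_mul_of_nonneg_left hth (by nlinarith)
        _ < (m b + m b ^ 2) * Theta S b t := by
            apply mul_lt_mul_of_pos_right (by nlinarith) hthp
    · unfold klEnv
      rw [hm0]
      norm_num
  · intro s hs
    constructor
    · intro t1 _ t2 _ h12
      apply Real.sqrt_le_sqrt
      exact mul_le_mul_of_nonneg_left (Theta_anti hS1 s h12)
        (by nlinarith [hmnn s hs])
    · have h1 : Filter.Tendsto (fun t => (m s + m s ^ 2) * Theta S s t)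
          Filter.atTop (nhds 0) := by
        have := (Theta_tendsto hS1 hS2 s).const_mul (m s + m s ^ 2)
        rwa [mul_zero] at this
      have h2 := (Real.continuous_sqrt.tendsto 0).comp h1
      rwa [Real.sqrt_zero] at h2

lemma klEnv_ge (h1le : (1:ℝ) ≤ Theta S s t) (hm : 0 ≤ m s) : m s ≤ klEnv S m s t := by
  have harg : 0 ≤ (m s + m s ^ 2) * Theta S s t := by nlinarith
  exact (Real.le_sqrt hm harg).2 (by nlinarith)

lemma min_le_sqrt {a b M T : ℝ} (ha : 0 ≤ a) (hb : 0 ≤ b) (haM : a ≤ M) (hbt : b ≤ T) :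
    min a b ≤ Real.sqrt (M * T) := by
  have hmin : 0 ≤ min a b := le_min ha hb
  have h2 : min a b * min a b ≤ M * T :=
    mul_le_mul (le_trans (min_le_left _ _) haM) (le_trans (min_le_right _ _) hbt) hmin
      (le_trans ha haM)
  calc min a b = Real.sqrt (min a b * min a b) := (Real.sqrt_mul_self hmin).symm
    _ ≤ Real.sqrt (M * T) := Real.sqrt_le_sqrt h2

lemma klEnv_ge_min {a b : ℝ} (ha : 0 ≤ a) (hb : 0 ≤ b) (haM : a ≤ m s + m s ^ 2)
    (hbt : b ≤ Theta S s t) : min a b ≤ klEnv S m s t :=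
  min_le_sqrt ha hb haM hbt

end KLenv

section Mfun

noncomputable def mfun (βa : ℝ → ℝ → ℝ) (γab : ℝ → ℝ) (βb : ℝ → ℝ → ℝ) : ℝ → ℝ :=
  fun s => βa s 0 + γab (βb s 0) + s

variable {βa βb : ℝ → ℝ → ℝ} {γab : ℝ → ℝ}

lemma mfun_cont (hβa : IsClassKL βa) (hβb : IsClassKL βb) (hγab : IsClassKInf γab) :
    ContinuousOn (mfun βa γab βb) (Set.Ici 0) := by
  apply ContinuousOn.add
  apply ContinuousOn.add
  · exact (hβa.1 0 le_rfl).1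
  · apply ContinuousOn.comp hγab.1 (hβb.1 0 le_rfl).1
    intro s hs
    exact kl_nonneg hβb hs le_rfl
  · exact continuousOn_id

lemma mfun_strict (hβa : IsClassKL βa) (hβb : IsClassKL βb) (hγab : IsClassKInf γab) :
    StrictMonoOn (mfun βa γab βb) (Set.Ici 0) := by
  intro a ha b hb hab
  have h1 : βa a 0 < βa b 0 := (hβa.1 0 le_rfl).2.1 ha hb hab
  have h2 : γab (βb a 0) ≤ γab (βb b 0) :=
    kinf_mono hγab (kl_nonneg hβb ha le_rfl) (kl_mono hβb ha hab.le le_rfl)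
  unfold mfun
  linarith

lemma mfun_zero (hβa : IsClassKL βa) (hβb : IsClassKL βb) (hγab : IsClassKInf γab) :
    mfun βa γab βb 0 = 0 := by
  unfold mfun
  rw [(hβa.1 0 le_rfl).2.2, (hβb.1 0 le_rfl).2.2, hγab.2.2.1]
  ring

lemma mfun_ge1 (hβa : IsClassKL βa) (hβb : IsClassKL βb) (hγab : IsClassKInf γab)
    {s : ℝ} (hs : 0 ≤ s) : βa s 0 ≤ mfun βa γab βb s := by
  have := kinf_nonneg hγab (kl_nonneg hβb hs le_rfl)
  unfold mfun
  linarith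

lemma mfun_ge2 (hβa : IsClassKL βa) (hβb : IsClassKL βb) (hγab : IsClassKInf γab)
    {s : ℝ} (hs : 0 ≤ s) : γab (βb s 0) ≤ mfun βa γab βb s := by
  have := kl_nonneg hβa hs (le_refl (0:ℝ))
  unfold mfun
  linarith

lemma mfun_nonneg (hβa : IsClassKL βa) (hβb : IsClassKL βb) (hγab : IsClassKInf γab)
    {s : ℝ} (hs : 0 ≤ s) : 0 ≤ mfun βa γab βb s :=
  le_trans (kl_nonneg hβa hs le_rfl) (mfun_ge1 hβa hβb hγab hs)

end Mfun

lemma le_max_min {u a b c : ℝ} (h1 : u ≤ max a c) (h2 : u ≤ max b c) :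
    u ≤ max (min a b) c := by
  rcases min_cases a b with ⟨he, _⟩ | ⟨he, _⟩ <;> rw [he] <;> assumption

/-- Lemma 1 of the paper: trajectory-based small-gain theorem for an interconnection
of two ISS subsystems with a common external input `r`. -/
theorem small_gain_interconnection {q n m : ℕ}
    (βz βx : ℝ → ℝ → ℝ) (hβz : IsClassKL βz) (hβx : IsClassKL βx)
    (γzx γzr γxz γxr : ℝ → ℝ)
    (hγzx : IsClassKInf γzx) (hγzr : IsClassKInf γzr)
    (hγxz : IsClassKInf γxz) (hγxr : IsClassKInf γxr)
    (hsg : ∀ s > 0, γzx (γxz s) < s) :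
    ∃ βbz βbx : ℝ → ℝ → ℝ, IsClassKL βbz ∧ IsClassKL βbx ∧
      ∀ (t0 : ℝ) (z : ℝ → EuclideanSpace ℝ (Fin q)) (x : ℝ → EuclideanSpace ℝ (Fin n))
        (r : ℝ → EuclideanSpace ℝ (Fin m)),
        ContinuousOn z (Set.Ici t0) → ContinuousOn x (Set.Ici t0) →
        BddAbove ((fun τ => ‖r τ‖) '' Set.Ici t0) →
        (∀ t0' t', t0 ≤ t0' → t0' ≤ t' →
          ‖z t'‖ ≤ max (βz ‖z t0'‖ (t' - t0'))
            (max (γzx (supNorm x t0' t')) (γzr (supNorm r t0' t')))) →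
        (∀ t0' t', t0 ≤ t0' → t0' ≤ t' →
          ‖x t'‖ ≤ max (βx ‖x t0'‖ (t' - t0'))
            (max (γxz (supNorm z t0' t')) (γxr (supNorm r t0' t')))) →
        ∀ t', t0 ≤ t' →
          ‖z t'‖ ≤ max (βbz (Real.sqrt (‖z t0‖ ^ 2 + ‖x t0‖ ^ 2)) (t' - t0))
            (max (γzr (supNorm r t0 t')) (γzx (γxr (supNorm r t0 t')))) ∧
          ‖x t'‖ ≤ max (βbx (Real.sqrt (‖z t0‖ ^ 2 + ‖x t0‖ ^ 2)) (t' - t0))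
            (max (γxr (supNorm r t0 t')) (γxz (γzr (supNorm r t0 t')))) := by
  have hsg' : ∀ s > 0, γxz (γzx s) < s := sg_swap hγzx hγxz hsg
  have hdec := fun (p J : ℕ) => decay (E1 := EuclideanSpace ℝ (Fin q))
    (E2 := EuclideanSpace ℝ (Fin n)) (E3 := EuclideanSpace ℝ (Fin m))
    βz βx hβz hβx γzx γzr γxz γxr hγzx hγzr hγxz hγxr hsg p ((2⁻¹ : ℝ) ^ J)
    (pow_pos (by norm_num) J)
  choose T hT0 hT using hdec
  set S : ℕ → ℕ → ℝ := fun p J => (J : ℝ) + ∑ i ∈ Finset.range (p+1), T i J with hSdef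
  have hS1 : ∀ (p j : ℕ), (j : ℝ) ≤ S p j := by
    intro p j
    have : (0:ℝ) ≤ ∑ i ∈ Finset.range (p+1), T i j :=
      Finset.sum_nonneg (fun i _ => hT0 i j)
    simp only [hSdef]
    linarith
  have hS2 : ∀ (p p' : ℕ) (j : ℕ), p ≤ p' → S p j ≤ S p' j := by
    intro p p' j hpp
    simp only [hSdef]
    have : ∑ i ∈ Finset.range (p+1), T i j ≤ ∑ i ∈ Finset.range (p'+1), T i j :=
      Finset.sum_le_sum_of_subset_of_nonneg
        (Finset.range_subset_range.2 (by omega)) (fun i _ _ => hT0 i j)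
    linarith
  have hTS : ∀ (p J : ℕ), T p J ≤ S p J := by
    intro p J
    have h1 : T p J ≤ ∑ i ∈ Finset.range (p+1), T i J :=
      Finset.single_le_sum (f := fun i => T i J) (fun i _ => hT0 i J)
        (Finset.self_mem_range_succ p)
    have h2 : (0:ℝ) ≤ (J:ℝ) := Nat.cast_nonneg J
    simp only [hSdef]
    linarith
  refine ⟨klEnv S (mfun βz γzx βx), klEnv S (mfun βx γxz βz),
    klEnv_isKL hS1 hS2 (mfun_cont hβz hβx hγzx) (mfun_strict hβz hβx hγzx)
      (mfun_zero hβz hβx hγzx),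
    klEnv_isKL hS1 hS2 (mfun_cont hβx hβz hγxz) (mfun_strict hβx hβz hγxz)
      (mfun_zero hβx hβz hγxz), ?_⟩
  intro t0 z x r hz hx hr Hz Hx t' ht'
  set s0 : ℝ := Real.sqrt (‖z t0‖ ^ 2 + ‖x t0‖ ^ 2) with hs0def
  have hs00 : 0 ≤ s0 := Real.sqrt_nonneg _
  have hzs0 : ‖z t0‖ ≤ s0 := Real.le_sqrt_of_sq_le (le_add_of_nonneg_right (sq_nonneg _))
  have hxs0 : ‖x t0‖ ≤ s0 := Real.le_sqrt_of_sq_le (le_add_of_nonneg_left (sq_nonneg _))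
  set τ : ℝ := t' - t0 with hτdef
  have hτ0 : 0 ≤ τ := by simp only [hτdef]; linarith
  set P : ℕ := (⌊s0⌋ + 1).toNat with hPdef
  have hfl0 : (0:ℤ) ≤ ⌊s0⌋ := Int.floor_nonneg.2 hs00
  have hPcast : ((P : ℤ) : ℝ) = ((⌊s0⌋ + 1 : ℤ) : ℝ) := by
    rw [hPdef, Int.toNat_of_nonneg (by omega)]
  have hs0P : s0 ≤ (P : ℝ) := by
    have h1 : s0 < ((⌊s0⌋ : ℝ) + 1) := Int.lt_floor_add_one s0
    have h2 : (P : ℝ) = (⌊s0⌋ : ℝ) + 1 := by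
      have := hPcast
      push_cast at this
      linarith [this]
    linarith
  have hbZ := baseBound βz βx hβz hβx γzx γzr γxz γxr hγzx hγzr hγxz hγxr hsg
    t0 z x r hz hx hr Hz Hx hs00 hzs0 hxs0
  have hbX := baseBound βx βz hβx hβz γxz γxr γzx γzr hγxz hγxr hγzx hγzr hsg'
    t0 x z r hx hz hr Hx Hz hs00 hxs0 hzs0
  have hmz0 : 0 ≤ mfun βz γzx βx s0 := mfun_nonneg hβz hβx hγzx hs00
  have hmx0 : 0 ≤ mfun βx γxz βz s0 := mfun_nonneg hβx hβz hγxz hs00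
  have hthP : theta S P τ ≤ Theta S s0 τ := by
    have := Theta_ge (S := S) s0 τ
    rwa [← hPdef] at this
  by_cases hne : {J : ℕ | S P J ≤ τ}.Nonempty
  · -- the decay estimate is active
    set Js : ℕ := Jstar S P τ with hJs
    have hspec : S P Js ≤ τ := Jstar_spec hS1 hne
    have htT : t0 + T P Js ≤ t' := by
      have h1 : T P Js ≤ S P Js := hTS P Js
      simp only [hτdef] at hspec
      linarith
    have hclaim := hT P Js t0 z x r hz hx hr Hz Hx (le_trans le_rfl hs0P) t' htT
    have hb : ((2:ℝ)⁻¹) ^ Js ≤ Theta S s0 τ := hthP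
    constructor
    · have hcmb := le_max_min (hbZ t' ht') hclaim.1
      refine le_trans hcmb (max_le_max ?_ le_rfl)
      apply klEnv_ge_min
      · exact le_max_of_le_left (kl_nonneg hβz hs00 le_rfl)
      · positivity
      · have h1 : max (βz s0 0) (γzx (βx s0 0)) ≤ mfun βz γzx βx s0 :=
          max_le (mfun_ge1 hβz hβx hγzx hs00) (mfun_ge2 hβz hβx hγzx hs00)
        nlinarith
      · exact hb
    · have hcmb := le_max_min (hbX t' ht') hclaim.2
      refine le_trans hcmb (max_le_max ?_ le_rfl)
      apply klEnv_ge_min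
      · exact le_max_of_le_left (kl_nonneg hβx hs00 le_rfl)
      · positivity
      · have h1 : max (βx s0 0) (γxz (βz s0 0)) ≤ mfun βx γxz βz s0 :=
          max_le (mfun_ge1 hβx hβz hγxz hs00) (mfun_ge2 hβx hβz hγxz hs00)
        nlinarith
      · exact hb
  · -- no decay yet : use the uniform bound
    have hth1 : (1:ℝ) ≤ Theta S s0 τ := by
      have he : theta S P τ = 1 := theta_of_empty hne
      rw [he] at hthP
      exact hthP
    constructor
    · refine le_trans (hbZ t' ht') (max_le_max ?_ le_rfl)
      refine le_trans ?_ (klEnv_ge hth1 hmz0)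
      exact max_le (mfun_ge1 hβz hβx hγzx hs00) (mfun_ge2 hβz hβx hγzx hs00)
    · refine le_trans (hbX t' ht') (max_le_max ?_ le_rfl)
      refine le_trans ?_ (klEnv_ge hth1 hmx0)
      exact max_le (mfun_ge1 hβx hβz hγxz hs00) (mfun_ge2 hβx hβz hγxz hs00)
end SG
end
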